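/- arXiv:2102.00732 — 5 statements merged into one kernel-verified Lean document; each statement's English description precedes it below -/
import Mathlib

section
/- Let q1, q2 > 0, Q = 1/q1 + 1/q2, and δ, ν > 0. Then the integral over ℝ² of ρ(t)^{-ν}·1{ρ(t) < δ} dt is finite if and only if Q > ν, where ρ(t) = |t1|^{q1} + |t2|^{q2}. -/
open MeasureTheory Set

lemma rho_cont' (q1 q2 : ℝ) (hq1 : 0 ≤ q1) (hq2 : 0 ≤ q2) :
    Continuous (fun t : ℝ × ℝ => |t.1| ^ q1 + |t.2| ^ q2) := by
  apply Continuous.add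
  · exact (continuous_abs.comp continuous_fst).rpow_const (fun x => Or.inr hq1)
  · exact (continuous_abs.comp continuous_snd).rpow_const (fun x => Or.inr hq2)

lemma rho_meas_set' (q1 q2 r : ℝ) (hq1 : 0 ≤ q1) (hq2 : 0 ≤ q2) :
    MeasurableSet {t : ℝ × ℝ | |t.1| ^ q1 + |t.2| ^ q2 < r} :=
  measurableSet_lt (rho_cont' q1 q2 hq1 hq2).measurable measurable_const

lemma smul_preimage' (a b : ℝ) (ha : a ≠ 0) (hb : b ≠ 0) {A : Set (ℝ×ℝ)} (hA : MeasurableSet A) :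
    volume (Prod.map (a * ·) (b * ·) ⁻¹' A)
      = ENNReal.ofReal |a⁻¹| * (ENNReal.ofReal |b⁻¹| * volume A) := by
  have hg : Measurable (Prod.map (a * ·) (b * ·)) :=
    (measurable_const_mul a).prodMap (measurable_const_mul b)
  rw [show (volume : Measure (ℝ×ℝ)) = Measure.prod volume volume from Measure.volume_eq_prod ℝ ℝ,
    ← Measure.map_apply hg hA,
    ← Measure.map_prod_map _ _ (measurable_const_mul a) (measurable_const_mul b),
    Real.map_volume_mul_left ha, Real.map_volume_mul_left hb]
  rw [Measure.prod_apply hA]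
  simp only [Measure.smul_apply, smul_eq_mul]
  rw [lintegral_smul_measure, lintegral_const_mul' _ _ ENNReal.ofReal_ne_top]
  rw [← Measure.prod_apply hA, smul_eq_mul]

lemma vol_sublevel' (q1 q2 r : ℝ) (hq1 : 0 < q1) (hq2 : 0 < q2) (hr : 0 < r) :
    volume {t : ℝ × ℝ | |t.1| ^ q1 + |t.2| ^ q2 < r}
      = ENNReal.ofReal (r ^ (1/q1 + 1/q2)) * volume {t : ℝ × ℝ | |t.1| ^ q1 + |t.2| ^ q2 < 1} := by
  set a := r ^ (1/q1) with ha_def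
  set b := r ^ (1/q2) with hb_def
  have ha : 0 < a := Real.rpow_pos_of_pos hr _
  have hb : 0 < b := Real.rpow_pos_of_pos hr _
  have haq : a ^ q1 = r := by
    rw [ha_def, ← Real.rpow_mul hr.le, one_div, inv_mul_cancel₀ hq1.ne', Real.rpow_one]
  have hbq : b ^ q2 = r := by
    rw [hb_def, ← Real.rpow_mul hr.le, one_div, inv_mul_cancel₀ hq2.ne', Real.rpow_one]
  have hset : {t : ℝ × ℝ | |t.1| ^ q1 + |t.2| ^ q2 < r}
      = Prod.map (a⁻¹ * ·) (b⁻¹ * ·) ⁻¹' {t : ℝ × ℝ | |t.1| ^ q1 + |t.2| ^ q2 < 1} := by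
    ext ⟨x, y⟩
    simp only [mem_setOf_eq, mem_preimage, Prod.map_apply]
    rw [abs_mul, abs_mul, abs_inv, abs_of_pos ha, abs_inv, abs_of_pos hb,
      Real.mul_rpow (by positivity) (abs_nonneg x), Real.mul_rpow (by positivity) (abs_nonneg y),
      Real.inv_rpow ha.le, Real.inv_rpow hb.le, haq, hbq]
    rw [← mul_add]
    constructor
    · intro h
      calc r⁻¹ * (|x| ^ q1 + |y| ^ q2) < r⁻¹ * r := by
            exact mul_lt_mul_of_pos_left h (by positivity)
        _ = 1 := inv_mul_cancel₀ hr.ne'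
    · intro h
      have := mul_lt_mul_of_pos_left h hr
      rwa [← mul_assoc, mul_inv_cancel₀ hr.ne', one_mul, mul_one] at this
  rw [hset, smul_preimage' _ _ (by positivity) (by positivity)
      (rho_meas_set' q1 q2 1 hq1.le hq2.le)]
  rw [inv_inv, inv_inv, abs_of_pos ha, abs_of_pos hb, ← mul_assoc,
    ← ENNReal.ofReal_mul ha.le, ha_def, hb_def, ← Real.rpow_add hr]

theorem stmt_1 (q1 q2 δ ν : ℝ) (hq1 : 0 < q1) (hq2 : 0 < q2) (hδ : 0 < δ) (hν : 0 < ν) :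
    IntegrableOn (fun t : ℝ × ℝ => (|t.1| ^ q1 + |t.2| ^ q2) ^ (-ν))
      {t : ℝ × ℝ | |t.1| ^ q1 + |t.2| ^ q2 < δ} volume
    ↔ 1 / q1 + 1 / q2 > ν := by
  set Q := 1 / q1 + 1 / q2 with hQ_def
  have hQ : 0 < Q := by positivity
  set f : ℝ × ℝ → ℝ := fun t => (|t.1| ^ q1 + |t.2| ^ q2) ^ (-ν) with hf_def
  set S : Set (ℝ × ℝ) := {t : ℝ × ℝ | |t.1| ^ q1 + |t.2| ^ q2 < δ} with hS_def
  have hρm : Measurable (fun t : ℝ × ℝ => |t.1| ^ q1 + |t.2| ^ q2) :=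
    (rho_cont' q1 q2 hq1.le hq2.le).measurable
  have hfm : Measurable f := by unfold f; measurability
  have hS : MeasurableSet S := rho_meas_set' q1 q2 δ hq1.le hq2.le
  set C := volume {t : ℝ × ℝ | |t.1| ^ q1 + |t.2| ^ q2 < 1} with hC_def
  have hC_pos : 0 < C := by
    refine (isOpen_lt (rho_cont' q1 q2 hq1.le hq2.le) continuous_const).measure_pos volume
      ⟨((0:ℝ), (0:ℝ)), ?_⟩
    simp [Real.zero_rpow hq1.ne', Real.zero_rpow hq2.ne']
  have hC_fin : C < ⊤ := by
    refine lt_of_le_of_lt (measure_mono (fun t ht => ?_)) (?_ :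
      volume (Icc (-1:ℝ) 1 ×ˢ Icc (-1:ℝ) 1) < ⊤)
    · obtain ⟨x, y⟩ := t
      simp only [mem_setOf_eq] at ht
      have hy0 : (0:ℝ) ≤ |y| ^ q2 := Real.rpow_nonneg (abs_nonneg y) q2
      have hx0 : (0:ℝ) ≤ |x| ^ q1 := Real.rpow_nonneg (abs_nonneg x) q1
      have hx : |x| ≤ 1 := by
        by_contra hx
        push_neg at hx
        have : (1:ℝ) ≤ |x| ^ q1 := by
          calc (1:ℝ) = 1 ^ q1 := (Real.one_rpow q1).symm
            _ ≤ |x| ^ q1 := Real.rpow_le_rpow zero_le_one hx.le hq1.le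
        linarith
      have hy : |y| ≤ 1 := by
        by_contra hy
        push_neg at hy
        have : (1:ℝ) ≤ |y| ^ q2 := by
          calc (1:ℝ) = 1 ^ q2 := (Real.one_rpow q2).symm
            _ ≤ |y| ^ q2 := Real.rpow_le_rpow zero_le_one hy.le hq2.le
        linarith
      exact ⟨abs_le.mp hx, abs_le.mp hy⟩
    · rw [Measure.volume_eq_prod, Measure.prod_prod, Real.volume_Icc]
      exact ENNReal.mul_lt_top ENNReal.ofReal_lt_top ENNReal.ofReal_lt_top
  -- nonnegativity of f
  have hf_nn : ∀ t, 0 ≤ f t := fun t => Real.rpow_nonneg (by positivity) _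
  -- Step 1: integrability ↔ finite lintegral
  have h1 : IntegrableOn f S volume ↔
      (∫⁻ t, ENNReal.ofReal (f t) ∂(volume.restrict S)) ≠ ⊤ :=
    (lintegral_ofReal_ne_top_iff_integrable hfm.aestronglyMeasurable
      (ae_of_all _ hf_nn)).symm
  -- Step 2: layer cake
  have h2 : (∫⁻ t, ENNReal.ofReal (f t) ∂(volume.restrict S))
      = ∫⁻ s in Ioi (0:ℝ), (volume.restrict S) {t : ℝ × ℝ | s < f t} :=
    lintegral_eq_lintegral_meas_lt _ (ae_of_all _ hf_nn) hfm.aemeasurable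
  -- Step 3: compute the measure of superlevel sets
  have h3 : ∀ s ∈ Ioi (0:ℝ), (volume.restrict S) {t : ℝ × ℝ | s < f t}
      = ENNReal.ofReal ((min δ (s ^ (-ν⁻¹))) ^ Q) * C := by
    intro s hs
    rw [mem_Ioi] at hs
    have hm_pos : 0 < min δ (s ^ (-ν⁻¹)) := lt_min hδ (Real.rpow_pos_of_pos hs _)
    have hsetm : MeasurableSet {t : ℝ × ℝ | s < f t} :=
      measurableSet_lt measurable_const hfm
    rw [Measure.restrict_apply hsetm]
    have hseteq : {t : ℝ × ℝ | s < f t} ∩ S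
        = {t : ℝ × ℝ | |t.1| ^ q1 + |t.2| ^ q2 < min δ (s ^ (-ν⁻¹))} \ {((0:ℝ), (0:ℝ))} := by
      ext ⟨x, y⟩
      simp only [mem_inter_iff, mem_setOf_eq, mem_diff, mem_singleton_iff, Prod.mk.injEq,
        hf_def, hS_def]
      set ρ := |x| ^ q1 + |y| ^ q2 with hρ_def
      have hρ0 : 0 ≤ ρ := by positivity
      rcases eq_or_lt_of_le hρ0 with h0 | hpos
      · -- ρ = 0, so x = y = 0
        have hρ00 : ρ = 0 := h0.symm
        have hsum : |x| ^ q1 + |y| ^ q2 = 0 := by rw [← hρ_def]; exact hρ00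
        have hx0 : (0:ℝ) ≤ |x| ^ q1 := Real.rpow_nonneg (abs_nonneg x) q1
        have hy0 : (0:ℝ) ≤ |y| ^ q2 := Real.rpow_nonneg (abs_nonneg y) q2
        have hx : x = 0 := by
          have h1 : |x| ^ q1 = 0 := by linarith
          exact abs_eq_zero.mp ((Real.rpow_eq_zero (abs_nonneg x) hq1.ne').mp h1)
        have hy : y = 0 := by
          have h1 : |y| ^ q2 = 0 := by linarith
          exact abs_eq_zero.mp ((Real.rpow_eq_zero (abs_nonneg y) hq2.ne').mp h1)
        constructor
        · rintro ⟨hlt, -⟩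
          exfalso
          rw [hρ00, Real.zero_rpow (neg_ne_zero.mpr hν.ne')] at hlt
          linarith
        · rintro ⟨-, hne⟩
          exact absurd ⟨hx, hy⟩ hne
      · -- ρ > 0
        have hkey : s < ρ ^ (-ν) ↔ ρ < s ^ (-ν⁻¹) := by
          rw [Real.rpow_neg hρ0, lt_inv_comm₀ hs (Real.rpow_pos_of_pos hpos ν)]
          rw [show s⁻¹ = (s ^ (-ν⁻¹)) ^ ν by
            rw [← Real.rpow_mul hs.le, neg_mul, inv_mul_cancel₀ hν.ne', Real.rpow_neg_one]]
          exact Real.rpow_lt_rpow_iff hρ0 (Real.rpow_nonneg hs.le _) hν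
        have hne : ¬(x = 0 ∧ y = 0) := by
          rintro ⟨hx, hy⟩
          have hz : ρ = 0 := by
            rw [hρ_def, hx, hy, abs_zero, Real.zero_rpow hq1.ne', Real.zero_rpow hq2.ne',
              add_zero]
          rw [hz] at hpos
          exact lt_irrefl 0 hpos
        constructor
        · rintro ⟨ha, hb⟩
          exact ⟨lt_min hb (hkey.mp ha), hne⟩
        · rintro ⟨ha, -⟩
          exact ⟨hkey.mpr (ha.trans_le (min_le_right _ _)), ha.trans_le (min_le_left _ _)⟩
    rw [hseteq, measure_diff_null (measure_singleton _),
      vol_sublevel' q1 q2 _ hq1 hq2 hm_pos, ← hQ_def, ← hC_def]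
  -- Step 4: rewrite the lintegral using h3
  have h4 : (∫⁻ s in Ioi (0:ℝ), (volume.restrict S) {t : ℝ × ℝ | s < f t})
      = ∫⁻ s in Ioi (0:ℝ), ENNReal.ofReal ((min δ (s ^ (-ν⁻¹))) ^ Q) * C :=
    setLIntegral_congr_fun measurableSet_Ioi h3
  -- Step 5: pull out the constant
  have h5 : (∫⁻ s in Ioi (0:ℝ), ENNReal.ofReal ((min δ (s ^ (-ν⁻¹))) ^ Q) * C)
      = (∫⁻ s in Ioi (0:ℝ), ENNReal.ofReal ((min δ (s ^ (-ν⁻¹))) ^ Q)) * C :=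
    lintegral_mul_const' C _ hC_fin.ne
  -- split point
  set t0 : ℝ := δ ^ (-ν) with ht0_def
  have ht0 : 0 < t0 := Real.rpow_pos_of_pos hδ _
  have ht0δ : t0 ^ (-ν⁻¹) = δ := by
    rw [ht0_def, ← Real.rpow_mul hδ.le, neg_mul_neg, mul_inv_cancel₀ hν.ne', Real.rpow_one]
  have hexp : -ν⁻¹ ≤ 0 := neg_nonpos.mpr (inv_nonneg.mpr hν.le)
  have hsplit : (∫⁻ s in Ioi (0:ℝ), ENNReal.ofReal ((min δ (s ^ (-ν⁻¹))) ^ Q))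
      = (∫⁻ s in Ioc (0:ℝ) t0, ENNReal.ofReal ((min δ (s ^ (-ν⁻¹))) ^ Q))
        + ∫⁻ s in Ioi t0, ENNReal.ofReal ((min δ (s ^ (-ν⁻¹))) ^ Q) := by
    rw [← Ioc_union_Ioi_eq_Ioi ht0.le,
      lintegral_union measurableSet_Ioi (Ioc_disjoint_Ioi le_rfl)]
  -- first piece is finite
  have hA_fin : (∫⁻ s in Ioc (0:ℝ) t0, ENNReal.ofReal ((min δ (s ^ (-ν⁻¹))) ^ Q)) < ⊤ := by
    have hbound : ∀ s ∈ Ioc (0:ℝ) t0, ENNReal.ofReal ((min δ (s ^ (-ν⁻¹))) ^ Q)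
        = ENNReal.ofReal (δ ^ Q) := by
      intro s hs
      have h1 : δ ≤ s ^ (-ν⁻¹) := by
        rw [← ht0δ]
        exact Real.rpow_le_rpow_of_nonpos hs.1 hs.2 hexp
      rw [min_eq_left h1]
    rw [setLIntegral_congr_fun measurableSet_Ioc hbound, setLIntegral_const]
    exact ENNReal.mul_lt_top ENNReal.ofReal_lt_top
      (by rw [Real.volume_Ioc]; exact ENNReal.ofReal_lt_top)
  -- second piece
  have hB_eq : (∫⁻ s in Ioi t0, ENNReal.ofReal ((min δ (s ^ (-ν⁻¹))) ^ Q))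
      = ∫⁻ s in Ioi t0, ENNReal.ofReal (s ^ (-ν⁻¹ * Q)) := by
    refine setLIntegral_congr_fun measurableSet_Ioi (fun s hs => ?_)
    have hs0 : 0 < s := ht0.trans hs
    have h1 : s ^ (-ν⁻¹) ≤ δ := by
      rw [← ht0δ]
      exact Real.rpow_le_rpow_of_nonpos ht0 hs.le hexp
    rw [min_eq_right h1, ← Real.rpow_mul hs0.le]
  have hm2 : Measurable fun s : ℝ => s ^ (-ν⁻¹ * Q) := by measurability
  have hB_iff : (∫⁻ s in Ioi t0, ENNReal.ofReal (s ^ (-ν⁻¹ * Q))) ≠ ⊤ ↔ (-ν⁻¹ * Q) < -1 := by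
    rw [lintegral_ofReal_ne_top_iff_integrable (f := fun s : ℝ => s ^ (-ν⁻¹ * Q))
      hm2.aestronglyMeasurable
      ((ae_restrict_iff' measurableSet_Ioi).mpr
        (ae_of_all _ fun s hs => Real.rpow_nonneg (ht0.trans hs).le _))]
    exact integrableOn_Ioi_rpow_iff ht0
  have harith : (-ν⁻¹ * Q < -1) ↔ ν < Q := by
    rw [neg_mul, neg_lt_neg_iff, inv_mul_eq_div, one_lt_div hν]
  -- assemble
  have hmul : ∀ a : ENNReal, a * C = ⊤ ↔ a = ⊤ := by
    intro a
    rw [ENNReal.mul_eq_top]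
    constructor
    · rintro (⟨-, hC⟩ | ⟨ha, -⟩)
      · exact absurd hC hC_fin.ne
      · exact ha
    · intro ha
      exact Or.inr ⟨ha, hC_pos.ne'⟩
  rw [h1, h2, h4, h5, hsplit, Ne, hmul, ENNReal.add_eq_top]
  simp only [hA_fin.ne, false_or]
  rw [← Ne, hB_eq, hB_iff, gt_iff_lt, ← harith]
end

section
/- Let q1, q2 > 0 and q = max{q1, q2, 1}. Then for all t, s ∈ ℝ², ρ(t+s)^{1/q} ≤ ρ(t)^{1/q} + ρ(s)^{1/q}, where ρ(t) = |t1|^{q1} + |t2|^{q2}. -/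
open Real Finset

private lemma real_rpow_add_le_add_rpow {a b p : ℝ} (ha : 0 ≤ a) (hb : 0 ≤ b)
    (hp : 0 ≤ p) (hp1 : p ≤ 1) : (a + b) ^ p ≤ a ^ p + b ^ p := by
  have := NNReal.coe_le_coe.2
    (NNReal.rpow_add_le_add_rpow ⟨a, ha⟩ ⟨b, hb⟩ hp hp1)
  push_cast at this
  exact Real.rpow_add_le_add_rpow ha hb hp hp1

theorem stmt_3 (q1 q2 : ℝ) (hq1 : 0 < q1) (hq2 : 0 < q2) :
    ∀ t s : ℝ × ℝ,
      (|t.1 + s.1| ^ q1 + |t.2 + s.2| ^ q2) ^ (1 / max (max q1 q2) 1) ≤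
        (|t.1| ^ q1 + |t.2| ^ q2) ^ (1 / max (max q1 q2) 1) +
          (|s.1| ^ q1 + |s.2| ^ q2) ^ (1 / max (max q1 q2) 1) := by
  intro t s
  set q : ℝ := max (max q1 q2) 1 with hqdef
  have hq1q : q1 ≤ q := le_trans (le_max_left _ _) (le_max_left _ _)
  have hq2q : q2 ≤ q := le_trans (le_max_right _ _) (le_max_left _ _)
  have hq : 1 ≤ q := le_max_right _ _
  have hqpos : 0 < q := lt_of_lt_of_le one_pos hq
  have hpow : ∀ (qi x : ℝ), (|x| ^ (qi / q)) ^ q = |x| ^ qi := by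
    intro qi x
    rw [← Real.rpow_mul (abs_nonneg _), div_mul_cancel₀ _ hqpos.ne']
  have key : ∀ (qi x y : ℝ), 0 < qi → qi ≤ q →
      |x + y| ^ qi ≤ (|x| ^ (qi / q) + |y| ^ (qi / q)) ^ q := by
    intro qi x y hqi hqiq
    rw [← hpow qi (x + y)]
    refine Real.rpow_le_rpow (Real.rpow_nonneg (abs_nonneg _) _) ?_ hqpos.le
    calc |x + y| ^ (qi / q) ≤ (|x| + |y|) ^ (qi / q) :=
          Real.rpow_le_rpow (abs_nonneg _) (abs_add_le _ _) (by positivity)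
      _ ≤ |x| ^ (qi / q) + |y| ^ (qi / q) :=
          real_rpow_add_le_add_rpow (abs_nonneg x) (abs_nonneg y) (by positivity)
            ((div_le_one hqpos).2 hqiq)
  set u1 : ℝ := |t.1| ^ (q1 / q)
  set u2 : ℝ := |t.2| ^ (q2 / q)
  set v1 : ℝ := |s.1| ^ (q1 / q)
  set v2 : ℝ := |s.2| ^ (q2 / q)
  have hu1 : 0 ≤ u1 := Real.rpow_nonneg (abs_nonneg _) _
  have hu2 : 0 ≤ u2 := Real.rpow_nonneg (abs_nonneg _) _
  have hv1 : 0 ≤ v1 := Real.rpow_nonneg (abs_nonneg _) _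
  have hv2 : 0 ≤ v2 := Real.rpow_nonneg (abs_nonneg _) _
  have mink := Real.Lp_add_le (univ : Finset (Fin 2)) ![u1, u2] ![v1, v2] hq
  simp only [Fin.sum_univ_two, Matrix.cons_val_zero, Matrix.cons_val_one, Matrix.head_cons,
    abs_of_nonneg hu1, abs_of_nonneg hu2, abs_of_nonneg hv1, abs_of_nonneg hv2,
    abs_of_nonneg (add_nonneg hu1 hv1), abs_of_nonneg (add_nonneg hu2 hv2)] at mink
  rw [hpow q1 t.1, hpow q2 t.2, hpow q1 s.1, hpow q2 s.2] at mink
  refine le_trans ?_ mink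
  refine Real.rpow_le_rpow (by positivity) ?_ (by positivity)
  exact add_le_add (key q1 t.1 s.1 hq1 hq1q) (key q2 t.2 s.2 hq2 hq2q)
end

section
/- Let q1 = 1, q2 = 2, ρ(t) = |t1| + |t2|², Q = 3/2, and for χ ∈ ℝ define g̃0(t) = t1^χ exp(−t2²/t1)·1{t1 > 0}. Then there is a constant C > 0 such that for all t with t1 > 0: |g̃0(t)| ≤ C ρ(t)^χ, |∂_1 g̃0(t)| ≤ C ρ(t)^{χ−1}, |∂_2 g̃0(t)| ≤ C ρ(t)^{χ−1/2}, and |∂_{12} g̃0(t)| ≤ C ρ(t)^{χ−3/2}. -/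
lemma exp_neg_le_aux (α : ℝ) : ∃ C : ℝ, 0 < C ∧ ∀ z : ℝ, 0 ≤ z →
    Real.exp (-z) ≤ C * (1 + z) ^ α := by
  obtain ⟨n, hn⟩ := exists_nat_ge (-α)
  obtain ⟨m, hm1, hnm⟩ : ∃ m : ℝ, 1 ≤ m ∧ (n : ℝ) ≤ m := by
    refine ⟨2 * n + 1, ?_, ?_⟩ <;>
      (have : (0:ℝ) ≤ n := Nat.cast_nonneg n; linarith)
  refine ⟨m ^ n, by positivity, fun z hz => ?_⟩
  have hm0 : 0 < m := by linarith
  have h1z : (1 : ℝ) ≤ 1 + z := by linarith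
  have key : Real.exp (-z) * (1 + z) ^ n ≤ m ^ n := by
    have h1 : 1 + z ≤ m * Real.exp (z / m) := by
      calc 1 + z ≤ m * (1 + z / m) := by
            rw [mul_add, mul_one, mul_div_cancel₀ _ hm0.ne']; linarith
        _ ≤ m * Real.exp (z / m) := by nlinarith [Real.add_one_le_exp (z / m)]
    calc Real.exp (-z) * (1 + z) ^ n
        ≤ Real.exp (-z) * (m * Real.exp (z / m)) ^ n := by
          have h0 : (0:ℝ) ≤ 1 + z := by linarith
          exact mul_le_mul_of_nonneg_left (pow_le_pow_left₀ h0 h1 n) (Real.exp_pos _).le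
      _ = m ^ n * (Real.exp (-z) * Real.exp (z / m) ^ n) := by rw [mul_pow]; ring
      _ ≤ m ^ n * 1 := by
          apply mul_le_mul_of_nonneg_left _ (by positivity)
          rw [← Real.exp_nat_mul, ← Real.exp_add]
          apply Real.exp_le_one_iff.mpr
          have : (n : ℝ) * (z / m) ≤ z := by
            rw [mul_div_assoc']
            apply div_le_of_le_mul₀ hm0.le hz
            nlinarith
          linarith
      _ = m ^ n := mul_one _
  have h2 : (1 + z) ^ (-(n : ℝ)) ≤ (1 + z) ^ α :=
    Real.rpow_le_rpow_of_exponent_le h1z (by linarith)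
  have hpz : (0:ℝ) < (1 + z) ^ n := by positivity
  calc Real.exp (-z) = Real.exp (-z) * (1 + z) ^ n * ((1 + z) ^ n)⁻¹ := by
        field_simp
    _ ≤ m ^ n * ((1 + z) ^ n)⁻¹ := mul_le_mul_of_nonneg_right key (by positivity)
    _ = m ^ n * (1 + z) ^ (-(n : ℝ)) := by
        rw [Real.rpow_neg (by linarith), Real.rpow_natCast]
    _ ≤ m ^ n * (1 + z) ^ α := mul_le_mul_of_nonneg_left h2 (by positivity)

/-- `g̃₀(t) = t₁^χ e^{-t₂²/t₁}` for `t₁ > 0`, zero otherwise. -/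
noncomputable def gTilde0 (χ : ℝ) (t : ℝ × ℝ) : ℝ :=
  if 0 < t.1 then t.1 ^ χ * Real.exp (-(t.2 ^ 2) / t.1) else 0

/-- `ρ(t) = |t₁| + |t₂|²`. -/
noncomputable def rhoHeat (t : ℝ × ℝ) : ℝ := |t.1| + |t.2| ^ 2

lemma hasDerivAt_gx (χ : ℝ) (y : ℝ) {x : ℝ} (hx : 0 < x) :
    HasDerivAt (fun x => gTilde0 χ (x, y))
      (x ^ (χ - 1) * Real.exp (-(y ^ 2) / x) * (χ + y ^ 2 / x)) x := by
  have h1 : HasDerivAt (fun x : ℝ => x ^ χ) (χ * x ^ (χ - 1)) x :=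
    Real.hasDerivAt_rpow_const (Or.inl hx.ne')
  have h2 : HasDerivAt (fun x : ℝ => -(y ^ 2) / x) (y ^ 2 / x ^ 2) x := by
    have h := (hasDerivAt_inv hx.ne').const_mul (-(y ^ 2))
    refine h.congr_deriv ?_
    field_simp
  have h4 := h1.mul h2.exp
  have hxχ : x ^ χ = x ^ (χ - 1) * x := by
    rw [← Real.rpow_add_one hx.ne']; ring_nf
  have h5 : HasDerivAt (fun x => x ^ χ * Real.exp (-(y ^ 2) / x))
      (x ^ (χ - 1) * Real.exp (-(y ^ 2) / x) * (χ + y ^ 2 / x)) x := by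
    refine h4.congr_deriv ?_
    rw [hxχ]; field_simp
  apply h5.congr_of_eventuallyEq
  filter_upwards [Ioi_mem_nhds hx] with a ha
  simp only [gTilde0]
  rw [if_pos (show (0:ℝ) < a from ha)]

lemma hasDerivAt_gy (χ : ℝ) {x : ℝ} (hx : 0 < x) (y : ℝ) :
    HasDerivAt (fun y => gTilde0 χ (x, y))
      (x ^ χ * Real.exp (-(y ^ 2) / x) * (-(2 * y) / x)) y := by
  have h2 : HasDerivAt (fun y : ℝ => -(y ^ 2) / x) (-(2 * y) / x) y := by
    have h := ((hasDerivAt_pow 2 y).neg).div_const x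
    refine h.congr_deriv ?_
    push_cast; ring
  have h5 := h2.exp.const_mul (x ^ χ)
  have : (fun y => gTilde0 χ (x, y)) = fun y => x ^ χ * Real.exp (-(y ^ 2) / x) :=
    funext fun y => by simp [gTilde0, hx]
  rw [this]
  refine h5.congr_deriv ?_; ring

lemma hasDerivAt_gxy (χ : ℝ) {x : ℝ} (hx : 0 < x) (y : ℝ) :
    HasDerivAt (fun y => deriv (fun x => gTilde0 χ (x, y)) x)
      (2 * y * x ^ (χ - 2) * Real.exp (-(y ^ 2) / x) * (1 - χ - y ^ 2 / x)) y := by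
  have hfun : (fun y => deriv (fun x => gTilde0 χ (x, y)) x)
      = fun y => x ^ (χ - 1) * Real.exp (-(y ^ 2) / x) * (χ + y ^ 2 / x) :=
    funext fun y => (hasDerivAt_gx χ y hx).deriv
  rw [hfun]
  have h2 : HasDerivAt (fun y : ℝ => -(y ^ 2) / x) (-(2 * y) / x) y := by
    have h := ((hasDerivAt_pow 2 y).neg).div_const x
    refine h.congr_deriv ?_
    push_cast; ring
  have hP : HasDerivAt (fun y : ℝ => χ + y ^ 2 / x) (2 * y / x) y := by
    have h := ((hasDerivAt_pow 2 y).div_const x).const_add χ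
    refine h.congr_deriv ?_
    push_cast; ring
  have h5 := (h2.exp.mul hP).const_mul (x ^ (χ - 1))
  have hxχ : x ^ (χ - 1) = x ^ (χ - 2) * x := by
    rw [← Real.rpow_add_one hx.ne']; ring_nf
  have heq : (fun y => x ^ (χ - 1) * Real.exp (-(y ^ 2) / x) * (χ + y ^ 2 / x))
      = fun y => x ^ (χ - 1) * (Real.exp (-(y ^ 2) / x) * (χ + y ^ 2 / x)) :=
    funext fun y => by ring
  rw [heq]
  refine h5.congr_deriv ?_
  rw [hxχ]; field_simp; ring

theorem stmt_7 (χ : ℝ) :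
    ∃ C : ℝ, 0 < C ∧ ∀ t : ℝ × ℝ, 0 < t.1 →
      |gTilde0 χ t| ≤ C * rhoHeat t ^ χ ∧
      |deriv (fun x => gTilde0 χ (x, t.2)) t.1| ≤ C * rhoHeat t ^ (χ - 1) ∧
      |deriv (fun y => gTilde0 χ (t.1, y)) t.2| ≤ C * rhoHeat t ^ (χ - 1 / 2) ∧
      |deriv (fun y => deriv (fun x => gTilde0 χ (x, y)) t.1) t.2|
        ≤ C * rhoHeat t ^ (χ - 3 / 2) := by
  obtain ⟨C, hC, hCle⟩ := exp_neg_le_aux (χ - 3)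
  have hχ0 : (0:ℝ) ≤ |χ| := abs_nonneg χ
  refine ⟨2 * (|χ| + 2) * C, by positivity, fun t ht => ?_⟩
  set z := t.2 ^ 2 / t.1 with hzdef
  have hz : 0 ≤ z := by positivity
  have h1z : (0:ℝ) < 1 + z := by linarith
  have hρ : rhoHeat t = t.1 * (1 + z) := by
    unfold rhoHeat
    rw [abs_of_pos ht, sq_abs, hzdef]
    field_simp
  have hρpos : 0 < rhoHeat t := by rw [hρ]; positivity
  have key : ∀ β : ℝ, χ - 2 ≤ β →
      t.1 ^ β * ((1 + z) * Real.exp (-z)) ≤ C * rhoHeat t ^ β := by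
    intro β hβ
    have hEb : Real.exp (-z) ≤ C * (1 + z) ^ (β - 1) :=
      (hCle z hz).trans (mul_le_mul_of_nonneg_left
        (Real.rpow_le_rpow_of_exponent_le (by linarith) (by linarith)) hC.le)
    calc t.1 ^ β * ((1 + z) * Real.exp (-z))
        ≤ t.1 ^ β * ((1 + z) * (C * (1 + z) ^ (β - 1))) := by
          apply mul_le_mul_of_nonneg_left _ (Real.rpow_pos_of_pos ht β).le
          exact mul_le_mul_of_nonneg_left hEb h1z.le
      _ = C * (t.1 ^ β * ((1 + z) ^ (β - 1) * (1 + z) ^ (1:ℝ))) := by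
          rw [Real.rpow_one]; ring
      _ = C * (t.1 ^ β * (1 + z) ^ β) := by
          rw [← Real.rpow_add h1z]; norm_num
      _ = C * rhoHeat t ^ β := by rw [hρ, Real.mul_rpow ht.le h1z.le]
  have hy : |t.2| ≤ rhoHeat t ^ ((1:ℝ)/2) := by
    rw [← Real.sqrt_eq_rpow, ← Real.sqrt_sq_eq_abs]
    apply Real.sqrt_le_sqrt
    unfold rhoHeat
    nlinarith [abs_nonneg t.1, sq_abs t.2]
  have hEexp : Real.exp (-z) ≤ (1 + z) * Real.exp (-z) := by
    nlinarith [Real.exp_pos (-z)]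
  have hnegdiv : -(t.2 ^ 2) / t.1 = -z := by rw [hzdef]; ring
  refine ⟨?_, ?_, ?_, ?_⟩
  · -- part 0
    have h0 : gTilde0 χ t = t.1 ^ χ * Real.exp (-z) := by
      simp only [gTilde0, if_pos ht]
      rw [← hnegdiv]
    rw [h0, abs_of_nonneg (by positivity)]
    calc t.1 ^ χ * Real.exp (-z) ≤ t.1 ^ χ * ((1 + z) * Real.exp (-z)) :=
          mul_le_mul_of_nonneg_left hEexp (Real.rpow_pos_of_pos ht χ).le
      _ ≤ C * rhoHeat t ^ χ := key χ (by linarith)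
      _ ≤ 2 * (|χ| + 2) * C * rhoHeat t ^ χ :=
          mul_le_mul_of_nonneg_right (by nlinarith) (Real.rpow_pos_of_pos hρpos χ).le
  · -- part 1
    have hd : deriv (fun x => gTilde0 χ (x, t.2)) t.1
        = t.1 ^ (χ - 1) * Real.exp (-z) * (χ + z) := by
      rw [(hasDerivAt_gx χ t.2 ht).deriv, hnegdiv]
    rw [hd, abs_mul, abs_mul, abs_of_pos (Real.rpow_pos_of_pos ht _),
      abs_of_pos (Real.exp_pos _)]
    have habs : |χ + z| ≤ (|χ| + 1) * (1 + z) := by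
      have h1 := abs_add_le χ z
      rw [abs_of_nonneg hz] at h1
      nlinarith
    calc t.1 ^ (χ - 1) * Real.exp (-z) * |χ + z|
        ≤ t.1 ^ (χ - 1) * Real.exp (-z) * ((|χ| + 1) * (1 + z)) := by
          apply mul_le_mul_of_nonneg_left habs (by positivity)
      _ = (|χ| + 1) * (t.1 ^ (χ - 1) * ((1 + z) * Real.exp (-z))) := by ring
      _ ≤ (|χ| + 1) * (C * rhoHeat t ^ (χ - 1)) :=
          mul_le_mul_of_nonneg_left (key _ (by linarith)) (by positivity)
      _ = ((|χ| + 1) * C) * rhoHeat t ^ (χ - 1) := by ring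
      _ ≤ 2 * (|χ| + 2) * C * rhoHeat t ^ (χ - 1) :=
          mul_le_mul_of_nonneg_right (by nlinarith) (Real.rpow_pos_of_pos hρpos _).le
  · -- part 2
    have hd : deriv (fun y => gTilde0 χ (t.1, y)) t.2
        = t.1 ^ χ * Real.exp (-z) * (-(2 * t.2) / t.1) := by
      rw [(hasDerivAt_gy χ ht t.2).deriv, hnegdiv]
    have hpow : t.1 ^ χ = t.1 ^ (χ - 1) * t.1 := by
      rw [← Real.rpow_add_one ht.ne']; ring_nf
    rw [hd, abs_mul, abs_mul, abs_of_pos (Real.rpow_pos_of_pos ht _),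
      abs_of_pos (Real.exp_pos _), abs_div, abs_of_pos ht, abs_neg, abs_mul,
      abs_two]
    calc t.1 ^ χ * Real.exp (-z) * (2 * |t.2| / t.1)
        = 2 * |t.2| * (t.1 ^ (χ - 1) * Real.exp (-z)) := by
          rw [hpow]; field_simp
      _ ≤ 2 * rhoHeat t ^ ((1:ℝ)/2) * (t.1 ^ (χ - 1) * ((1 + z) * Real.exp (-z))) := by
          apply mul_le_mul
          · linarith
          · exact mul_le_mul_of_nonneg_left hEexp (Real.rpow_pos_of_pos ht _).le
          · positivity
          · positivity
      _ ≤ 2 * rhoHeat t ^ ((1:ℝ)/2) * (C * rhoHeat t ^ (χ - 1)) :=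
          mul_le_mul_of_nonneg_left (key _ (by linarith)) (by positivity)
      _ = 2 * C * (rhoHeat t ^ ((1:ℝ)/2) * rhoHeat t ^ (χ - 1)) := by ring
      _ = 2 * C * rhoHeat t ^ (χ - 1/2) := by
          rw [← Real.rpow_add hρpos, show (1:ℝ)/2 + (χ - 1) = χ - 1/2 from by ring]
      _ ≤ 2 * (|χ| + 2) * C * rhoHeat t ^ (χ - 1/2) :=
          mul_le_mul_of_nonneg_right (by nlinarith) (Real.rpow_pos_of_pos hρpos _).le
  · -- part 3
    have hd : deriv (fun y => deriv (fun x => gTilde0 χ (x, y)) t.1) t.2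
        = 2 * t.2 * t.1 ^ (χ - 2) * Real.exp (-z) * (1 - χ - z) := by
      rw [(hasDerivAt_gxy χ ht t.2).deriv, hnegdiv]
    rw [hd, abs_mul, abs_mul, abs_mul, abs_mul, abs_two,
      abs_of_pos (Real.rpow_pos_of_pos ht _), abs_of_pos (Real.exp_pos _)]
    have habs : |1 - χ - z| ≤ (|χ| + 2) * (1 + z) := by
      rw [abs_le]
      constructor
      · nlinarith [neg_abs_le χ, le_abs_self χ]
      · nlinarith [neg_abs_le χ, le_abs_self χ]
    calc 2 * |t.2| * t.1 ^ (χ - 2) * Real.exp (-z) * |1 - χ - z|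
        ≤ 2 * |t.2| * t.1 ^ (χ - 2) * Real.exp (-z) * ((|χ| + 2) * (1 + z)) := by
          apply mul_le_mul_of_nonneg_left habs (by positivity)
      _ = 2 * (|χ| + 2) * |t.2| * (t.1 ^ (χ - 2) * ((1 + z) * Real.exp (-z))) := by
          ring
      _ ≤ 2 * (|χ| + 2) * rhoHeat t ^ ((1:ℝ)/2) * (C * rhoHeat t ^ (χ - 2)) := by
          apply mul_le_mul
          · have : (0:ℝ) ≤ 2 * (|χ| + 2) := by positivity
            exact mul_le_mul_of_nonneg_left hy this
          · exact key _ (by linarith)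
          · positivity
          · positivity
      _ = 2 * (|χ| + 2) * C * (rhoHeat t ^ ((1:ℝ)/2) * rhoHeat t ^ (χ - 2)) := by
          ring
      _ = 2 * (|χ| + 2) * C * rhoHeat t ^ (χ - 3/2) := by
          rw [← Real.rpow_add hρpos, show (1:ℝ)/2 + (χ - 2) = χ - 3/2 from by ring]
end

section
/- Let χ > −3/4 and c1, c2 > 0. Define g(t) = [t1^χ / (2^{1/2}(2π)^{3/2} c2 Γ(χ+3/2))]·exp(−c1 t1 − t2²/(4 c2² t1))·1{t1 > 0}. Then for every x = (x1,x2) ∈ ℝ², ∫_{ℝ²} g(t) e^{i t·x} dt = (1/(2π))·(x1² + (c1 + c2² x2²)²)^{−(χ+3/2)/2}·exp(i(χ+3/2)·arctan(x1/(c1 + c2² x2²))). In particular |∫_{ℝ²} g(t) e^{i t·x} dt|² = (1/(2π)²)·(x1² + (c1 + c2² x2²)²)^{−(χ+3/2)}. -/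
open Real MeasureTheory

/-- The fractional heat kernel
`g(t) = t₁^χ/(2^{1/2}(2π)^{3/2} c₂ Γ(χ+3/2)) · e^{-c₁t₁ - t₂²/(4c₂²t₁)}` for `t₁ > 0`. -/
noncomputable def gFHK (χ c1 c2 : ℝ) (t : ℝ × ℝ) : ℝ :=
  if 0 < t.1 then
    t.1 ^ χ / ((2 : ℝ) ^ ((1 : ℝ) / 2) * (2 * π) ^ ((3 : ℝ) / 2) * c2 * Real.Gamma (χ + 3 / 2))
      * Real.exp (-c1 * t.1 - t.2 ^ 2 / (4 * c2 ^ 2 * t.1))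
  else 0

section FHKaux
open Set Filter Complex


noncomputable def GG (s : ℝ) (z : ℂ) : ℂ :=
  ∫ t : ℝ in Ioi 0, (t:ℂ) ^ ((s:ℂ) - 1) * Complex.exp (-z * t)

lemma GG_meas (s : ℝ) (z : ℂ) :
    AEStronglyMeasurable (fun t : ℝ => (t:ℂ) ^ ((s:ℂ) - 1) * Complex.exp (-z * t))
      (volume.restrict (Ioi 0)) := by
  apply ContinuousOn.aestronglyMeasurable _ measurableSet_Ioi
  apply ContinuousOn.mul
  · intro t ht
    exact (continuousAt_ofReal_cpow_const t _ (Or.inr (ne_of_gt ht))).continuousWithinAt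
  · exact (Complex.continuous_exp.comp (continuous_const.mul Complex.continuous_ofReal)).continuousOn

lemma norm_integrand (s : ℝ) (z : ℂ) {t : ℝ} (ht : 0 < t) :
    ‖(t:ℂ) ^ ((s:ℂ) - 1) * Complex.exp (-z * t)‖ = t ^ (s - 1) * Real.exp (-z.re * t) := by
  rw [norm_mul, Complex.norm_exp,
    Complex.norm_cpow_eq_rpow_re_of_pos ht]
  have h1 : ((s:ℂ) - 1).re = s - 1 := by simp
  have h2 : (-z * (t:ℂ)).re = -z.re * t := by simp
  rw [h1, h2]

lemma bound_integrable (u b : ℝ) (hu : -1 < u) (hb : 0 < b) :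
    IntegrableOn (fun t : ℝ => t ^ u * Real.exp (-b * t)) (Ioi 0) := by
  have := integrableOn_rpow_mul_exp_neg_mul_rpow hu zero_lt_one hb
  simpa using this

lemma GG_integrableOn (s : ℝ) (hs : 0 < s) {z : ℂ} (hz : 0 < z.re) :
    IntegrableOn (fun t : ℝ => (t:ℂ) ^ ((s:ℂ) - 1) * Complex.exp (-z * t)) (Ioi 0) := by
  refine Integrable.mono' (bound_integrable (s-1) z.re (by linarith) hz) (GG_meas s z) ?_
  filter_upwards [ae_restrict_mem measurableSet_Ioi] with t ht
  rw [norm_integrand s z ht]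

lemma GG_hasDerivAt (s : ℝ) (hs : 0 < s) {z : ℂ} (hz : 0 < z.re) :
    HasDerivAt (GG s) (∫ t : ℝ in Ioi 0, (t:ℂ) ^ ((s:ℂ) - 1) * (Complex.exp (-z * t) * (-t))) z := by
  have hz2 : (0:ℝ) < z.re/2 := half_pos hz
  have key := hasDerivAt_integral_of_dominated_loc_of_deriv_le (μ := volume.restrict (Ioi 0))
    (F := fun (w : ℂ) (t : ℝ) => (t:ℂ) ^ ((s:ℂ) - 1) * Complex.exp (-w * t))
    (F' := fun (w : ℂ) (t : ℝ) => (t:ℂ) ^ ((s:ℂ) - 1) * (Complex.exp (-w * t) * (-t)))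
    (bound := fun t : ℝ => t ^ s * Real.exp (-(z.re/2) * t))
    (x₀ := z) (s := Metric.ball z (z.re/2)) (Metric.ball_mem_nhds z hz2)
    (Eventually.of_forall fun w => GG_meas s w)
    (GG_integrableOn s hs hz)
    ?meas' ?bnd ?bint ?diff
  · exact key.2
  case meas' =>
    apply ContinuousOn.aestronglyMeasurable _ measurableSet_Ioi
    apply ContinuousOn.mul
    · intro t ht
      exact (continuousAt_ofReal_cpow_const t _ (Or.inr (ne_of_gt ht))).continuousWithinAt
    · exact ((Complex.continuous_exp.comp (continuous_const.mul Complex.continuous_ofReal)).mul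
        (Complex.continuous_ofReal.neg)).continuousOn
  case bnd =>
    filter_upwards [ae_restrict_mem measurableSet_Ioi] with t ht w hw
    have ht' : (0:ℝ) < t := ht
    have hwre : z.re/2 ≤ w.re := by
      have h1 : |w.re - z.re| ≤ dist w z := by
        rw [Complex.dist_eq]
        simpa using Complex.abs_re_le_norm (w - z)
      have := (abs_lt.mp (lt_of_le_of_lt h1 (Metric.mem_ball.mp hw))).1
      linarith
    rw [norm_mul, norm_mul, Complex.norm_cpow_eq_rpow_re_of_pos ht']
    have h1 : ‖Complex.exp (-w * t)‖ = Real.exp (-w.re * t) := by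
      rw [Complex.norm_exp]
      congr 1; simp
    have h2 : ‖(-(t:ℂ))‖ = t := by
      rw [norm_neg, Complex.norm_real, Real.norm_eq_abs, _root_.abs_of_nonneg ht'.le]
    rw [h1, h2]
    have hre : ((s:ℂ) - 1).re = s - 1 := by simp
    rw [hre]
    have hts : t ^ s = t ^ (s-1) * t := by
      nth_rewrite 1 [show s = s - 1 + 1 by ring]
      rw [Real.rpow_add_one ht'.ne']
    calc t ^ (s-1) * (Real.exp (-w.re * t) * t) = t ^ s * Real.exp (-w.re * t) := by
          rw [hts]; ring
      _ ≤ t ^ s * Real.exp (-(z.re/2) * t) := by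
          apply mul_le_mul_of_nonneg_left _ (Real.rpow_nonneg ht'.le s)
          exact Real.exp_le_exp.mpr (mul_le_mul_of_nonneg_right (neg_le_neg hwre) ht'.le)
  case bint => exact bound_integrable s (z.re/2) (by linarith) hz2
  case diff =>
    filter_upwards [ae_restrict_mem measurableSet_Ioi] with t ht w hw
    have h : HasDerivAt (fun w : ℂ => -w * (t:ℂ)) (-t) w := by
      simpa using ((hasDerivAt_id w).neg.mul_const (t:ℂ))
    exact (h.cexp).const_mul _

lemma GG_eq (s : ℝ) (hs : 0 < s) {z : ℂ} (hz : 0 < z.re) :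
    GG s z = (Real.Gamma s : ℂ) * z ^ (-(s:ℂ)) := by
  set U : Set ℂ := {w : ℂ | 0 < w.re} with hU
  have hUo : IsOpen U := isOpen_lt continuous_const Complex.continuous_re
  have hUc : IsPreconnected U := (convex_halfSpace_re_gt 0).isPreconnected
  have hGa : AnalyticOnNhd ℂ (GG s) U := by
    apply DifferentiableOn.analyticOnNhd _ hUo
    exact fun w hw => ((GG_hasDerivAt s hs hw).differentiableAt).differentiableWithinAt
  have hHa : AnalyticOnNhd ℂ (fun w : ℂ => (Real.Gamma s : ℂ) * w ^ (-(s:ℂ))) U := by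
    apply DifferentiableOn.analyticOnNhd _ hUo
    intro w hw
    refine (DifferentiableAt.const_mul ?_ _).differentiableWithinAt
    exact (differentiableAt_id.cpow (differentiableAt_const _) (Or.inl hw))
  have hreal : ∀ r : ℝ, 0 < r → GG s r = (Real.Gamma s : ℂ) * (r:ℂ) ^ (-(s:ℂ)) := by
    intro r hr
    have h := Complex.integral_cpow_mul_exp_neg_mul_Ioi
      (a := (s:ℂ)) (r := r) (by simpa using hs) hr
    have heq : GG s (r:ℂ) = ∫ t : ℝ in Ioi 0, (t:ℂ) ^ ((s:ℂ) - 1) * Complex.exp (-((r:ℝ) * t)) := by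
      unfold GG
      apply setIntegral_congr_fun measurableSet_Ioi
      intro t _
      push_cast
      ring_nf
    rw [heq, h, Complex.Gamma_ofReal, mul_comm]
    congr 1
    rw [one_div, Complex.inv_cpow _ _ (by rw [Complex.arg_ofReal_of_nonneg hr.le]; exact Real.pi_ne_zero.symm),
      ← Complex.cpow_neg]
  have hone : (1:ℂ) ∈ U := by simp [hU]
  have hfreq : ∃ᶠ w in nhdsWithin (1:ℂ) {(1:ℂ)}ᶜ,
      GG s w = (fun w : ℂ => (Real.Gamma s : ℂ) * w ^ (-(s:ℂ))) w := by
    have htend : Tendsto (fun n : ℕ => ((1 + (1:ℝ)/(n+1) : ℝ) : ℂ)) atTop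
        (nhdsWithin (1:ℂ) {(1:ℂ)}ᶜ) := by
      apply tendsto_nhdsWithin_of_tendsto_nhds_of_eventually_within
      · have : Tendsto (fun n : ℕ => (1 + (1:ℝ)/(n+1) : ℝ)) atTop (nhds 1) := by
          have := tendsto_one_div_add_atTop_nhds_zero_nat (𝕜 := ℝ)
          simpa using tendsto_const_nhds.add this
        have h2 := (Complex.continuous_ofReal.tendsto (1:ℝ)).comp this
        convert h2 using 1 <;> simp [Function.comp_def]
      · apply Eventually.of_forall
        intro n
        simp only [Set.mem_compl_iff, Set.mem_singleton_iff]
        intro hcon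
        have : (1 + (1:ℝ)/(n+1)) = 1 := by exact_mod_cast hcon
        have hpos : (0:ℝ) < (1:ℝ)/(n+1) := by positivity
        linarith
    exact htend.frequently (Frequently.of_forall fun n => hreal _ (by positivity))
  exact (hGa.eqOn_of_preconnected_of_frequently_eq hHa hUc hone hfreq) hz


lemma cpow_polar (s u b : ℝ) (ha : 0 < u) :
    ((u:ℂ) - Complex.I * b) ^ (-(s:ℂ))
      = (((b^2 + u^2) ^ (-s/2) : ℝ) : ℂ)
        * Complex.exp (Complex.I * ((s * Real.arctan (b / u) : ℝ) : ℂ)) := by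
  set z : ℂ := (u:ℂ) - Complex.I * b with hzdef
  have hre : z.re = u := by simp [hzdef]
  have him : z.im = -b := by simp [hzdef]
  have hz0 : z ≠ 0 := by
    intro h
    rw [Complex.ext_iff] at h
    simp [hre] at h
    linarith [h.1]
  have habs : ‖z‖ = Real.sqrt (b^2 + u^2) := by
    rw [Complex.norm_def, Complex.normSq_apply, hre, him]
    congr 1; ring
  have harg : Complex.arg z = -Real.arctan (b / u) := by
    have h2 : |Complex.arg z| < π/2 :=
      Complex.abs_arg_lt_pi_div_two_iff.mpr (Or.inl (by rw [hre]; exact ha))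
    have habs' := abs_lt.mp h2
    have htan := Complex.tan_arg z
    calc Complex.arg z = Real.arctan (Real.tan (Complex.arg z)) :=
          (Real.arctan_tan habs'.1 habs'.2).symm
      _ = Real.arctan (z.im / z.re) := by rw [htan]
      _ = -Real.arctan (b / u) := by
          rw [hre, him, neg_div, Real.arctan_neg]
  have hX : (0:ℝ) < b^2 + u^2 := by positivity
  rw [Complex.cpow_def_of_ne_zero hz0]
  have hlog : Complex.log z * (-(s:ℂ))
      = ((-s * Real.log (Real.sqrt (b^2 + u^2)) : ℝ) : ℂ)
        + Complex.I * ((s * Real.arctan (b / u) : ℝ) : ℂ) := by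
    rw [Complex.log, habs, harg]
    push_cast
    ring
  rw [hlog, Complex.exp_add]
  congr 1
  rw [← Complex.ofReal_exp]
  congr 1
  rw [Real.sqrt_eq_rpow, Real.log_rpow hX]
  rw [Real.rpow_def_of_pos hX]
  congr 1
  ring

section aux
variable (χ c1 c2 : ℝ)

lemma Kpos (hχ : -(3/4) < χ) (hc2 : 0 < c2) :
    0 < (2 : ℝ) ^ ((1 : ℝ) / 2) * (2 * π) ^ ((3 : ℝ) / 2) * c2 * Real.Gamma (χ + 3 / 2) := by
  have h1 : 0 < Real.Gamma (χ + 3/2) := Real.Gamma_pos_of_pos (by linarith)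
  have h2 : (0:ℝ) < 2 * π := by positivity
  positivity

lemma Kval : (2 : ℝ) ^ ((1 : ℝ) / 2) * (2 * π) ^ ((3 : ℝ) / 2) = 4 * π * Real.sqrt π := by
  rw [Real.mul_rpow (by norm_num) pi_pos.le, ← mul_assoc,
    ← Real.rpow_add (by norm_num : (0:ℝ) < 2)]
  norm_num
  rw [show (3:ℝ)/2 = 1 + 1/2 by norm_num, Real.rpow_add pi_pos, Real.rpow_one,
    ← Real.sqrt_eq_rpow]
  ring

lemma gFHK_pos_eq {t1 : ℝ} (ht1 : 0 < t1) (t2 : ℝ) :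
    gFHK χ c1 c2 (t1, t2)
      = t1 ^ χ / ((2 : ℝ) ^ ((1 : ℝ) / 2) * (2 * π) ^ ((3 : ℝ) / 2) * c2 * Real.Gamma (χ + 3 / 2))
        * Real.exp (-c1 * t1 - t2 ^ 2 / (4 * c2 ^ 2 * t1)) := by
  simp only [gFHK]; rw [if_pos ht1]

lemma gFHK_nonpos_eq {t1 : ℝ} (ht1 : ¬ 0 < t1) (t2 : ℝ) : gFHK χ c1 c2 (t1, t2) = 0 := by
  simp only [gFHK]; rw [if_neg ht1]

lemma gFHK_sect (hc2 : 0 < c2) {t1 : ℝ} (ht1 : 0 < t1) :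
    (fun t2 => gFHK χ c1 c2 (t1, t2))
      = fun t2 => (t1 ^ χ / ((2 : ℝ) ^ ((1 : ℝ) / 2) * (2 * π) ^ ((3 : ℝ) / 2) * c2
          * Real.Gamma (χ + 3 / 2)) * Real.exp (-c1 * t1))
        * Real.exp (-(1/(4 * c2 ^ 2 * t1)) * t2 ^ 2) := by
  funext t2
  rw [gFHK_pos_eq χ c1 c2 ht1 t2]
  conv_rhs => rw [mul_assoc, ← Real.exp_add]
  congr 2
  ring

lemma gFHK_meas : Measurable (gFHK χ c1 c2) := by
  have h1 : Measurable fun t : ℝ × ℝ =>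
      t.1 ^ χ / ((2 : ℝ) ^ ((1 : ℝ) / 2) * (2 * π) ^ ((3 : ℝ) / 2) * c2 * Real.Gamma (χ + 3 / 2))
        * Real.exp (-c1 * t.1 - t.2 ^ 2 / (4 * c2 ^ 2 * t.1)) := by fun_prop
  exact Measurable.ite (measurableSet_lt measurable_const measurable_fst) h1 measurable_const

lemma gFHK_nonneg (hχ : -(3/4) < χ) (hc2 : 0 < c2) (t : ℝ × ℝ) : 0 ≤ gFHK χ c1 c2 t := by
  simp only [gFHK]
  split
  · have hK := Kpos χ c2 hχ hc2
    have : (0:ℝ) ≤ t.1 ^ χ := Real.rpow_nonneg (by linarith [‹0 < t.1›]) χ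
    positivity
  · exact le_refl 0
end aux

section aux2
variable (χ c1 c2 : ℝ)

lemma sqrt_pib (c2 t1 : ℝ) (hc2 : 0 < c2) (ht1 : 0 < t1) :
    Real.sqrt (π / (1/(4 * c2 ^ 2 * t1))) = 2 * c2 * Real.sqrt π * Real.sqrt t1 := by
  rw [show π / (1/(4 * c2 ^ 2 * t1)) = (2 * c2 * Real.sqrt π * Real.sqrt t1)^2 by
    rw [mul_pow, mul_pow, mul_pow, Real.sq_sqrt pi_pos.le, Real.sq_sqrt ht1.le]
    field_simp
    ring]
  exact Real.sqrt_sq (by positivity)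

lemma gFHK_sect_integrable (hc2 : 0 < c2) (t1 : ℝ) :
    Integrable (fun t2 => gFHK χ c1 c2 (t1, t2)) := by
  by_cases ht1 : 0 < t1
  · rw [gFHK_sect χ c1 c2 hc2 ht1]
    exact (integrable_exp_neg_mul_sq (by positivity)).const_mul _
  · have : (fun t2 => gFHK χ c1 c2 (t1, t2)) = fun _ => (0:ℝ) := by
      funext t2; exact gFHK_nonpos_eq χ c1 c2 ht1 t2
    rw [this]
    exact integrable_zero _ _ _

lemma gFHK_sect_integral (hc2 : 0 < c2) {t1 : ℝ} (ht1 : 0 < t1) :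
    ∫ t2 : ℝ, gFHK χ c1 c2 (t1, t2)
      = (2 * c2 * Real.sqrt π
          / ((2 : ℝ) ^ ((1 : ℝ) / 2) * (2 * π) ^ ((3 : ℝ) / 2) * c2 * Real.Gamma (χ + 3 / 2)))
        * (t1 ^ (χ + 1/2) * Real.exp (-c1 * t1)) := by
  rw [gFHK_sect χ c1 c2 hc2 ht1, integral_const_mul, integral_gaussian,
    sqrt_pib c2 t1 hc2 ht1]
  rw [Real.rpow_add ht1, show t1 ^ ((1:ℝ)/2) = Real.sqrt t1 from (Real.sqrt_eq_rpow t1).symm]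
  ring

lemma gFHK_integrable (hχ : -(3/4) < χ) (hc1 : 0 < c1) (hc2 : 0 < c2) :
    Integrable (gFHK χ c1 c2) := by
  rw [show (volume : Measure (ℝ × ℝ)) = volume.prod volume from (Measure.volume_eq_prod ℝ ℝ)]
  refine (integrable_prod_iff (gFHK_meas χ c1 c2).aestronglyMeasurable).mpr ⟨?_, ?_⟩
  · exact Eventually.of_forall fun t1 => gFHK_sect_integrable χ c1 c2 hc2 t1
  · have heq : (fun t1 : ℝ => ∫ t2 : ℝ, ‖gFHK χ c1 c2 (t1, t2)‖)
        = fun t1 => Set.indicator (Ioi 0)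
            (fun t1 => (2 * c2 * Real.sqrt π
              / ((2 : ℝ) ^ ((1 : ℝ) / 2) * (2 * π) ^ ((3 : ℝ) / 2) * c2 * Real.Gamma (χ + 3 / 2)))
              * (t1 ^ (χ + 1/2) * Real.exp (-c1 * t1))) t1 := by
      funext t1
      by_cases ht1 : 0 < t1
      · rw [Set.indicator_of_mem (mem_Ioi.mpr ht1), ← gFHK_sect_integral χ c1 c2 hc2 ht1]
        congr 1
        funext t2
        rw [Real.norm_eq_abs, _root_.abs_of_nonneg (gFHK_nonneg χ c1 c2 hχ hc2 _)]
      · rw [Set.indicator_of_notMem (by simpa using ht1)]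
        have : (fun t2 => ‖gFHK χ c1 c2 (t1, t2)‖) = fun _ => (0:ℝ) := by
          funext t2; rw [gFHK_nonpos_eq χ c1 c2 ht1 t2, norm_zero]
        rw [this, integral_const]
        simp
    rw [heq]
    exact IntegrableOn.integrable_indicator
      ((bound_integrable (χ+1/2) c1 (by linarith) hc1).const_mul _) measurableSet_Ioi

end aux2

section aux3
variable (χ c1 c2 x1 x2 : ℝ)

lemma FF_meas : AEStronglyMeasurable
    (fun t : ℝ × ℝ => (gFHK χ c1 c2 t : ℂ) * Complex.exp (Complex.I * ((t.1 * x1 + t.2 * x2 : ℝ) : ℂ)))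
    (volume : Measure (ℝ × ℝ)) := by
  apply Measurable.aestronglyMeasurable
  apply Measurable.mul
  · exact Complex.measurable_ofReal.comp (gFHK_meas χ c1 c2)
  · fun_prop

lemma FF_norm (t : ℝ × ℝ) (hχ : -(3/4) < χ) (hc2 : 0 < c2) :
    ‖(gFHK χ c1 c2 t : ℂ) * Complex.exp (Complex.I * ((t.1 * x1 + t.2 * x2 : ℝ) : ℂ))‖
      = gFHK χ c1 c2 t := by
  rw [norm_mul, Complex.norm_real, Real.norm_eq_abs,
    Complex.norm_exp, _root_.abs_of_nonneg (gFHK_nonneg χ c1 c2 hχ hc2 t)]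
  have : (Complex.I * ((t.1 * x1 + t.2 * x2 : ℝ) : ℂ)).re = 0 := by simp
  rw [this, Real.exp_zero, mul_one]

lemma FF_integrable (hχ : -(3/4) < χ) (hc1 : 0 < c1) (hc2 : 0 < c2) :
    Integrable
      (fun t : ℝ × ℝ => (gFHK χ c1 c2 t : ℂ) * Complex.exp (Complex.I * ((t.1 * x1 + t.2 * x2 : ℝ) : ℂ)))
      (volume : Measure (ℝ × ℝ)) := by
  refine (gFHK_integrable χ c1 c2 hχ hc1 hc2).mono' (FF_meas χ c1 c2 x1 x2) ?_
  exact Eventually.of_forall fun t => le_of_eq (FF_norm χ c1 c2 x1 x2 t hχ hc2)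

lemma Kcoef (hχ : -(3/4) < χ) (hc2 : 0 < c2) :
    2 * c2 * Real.sqrt π
      / ((2 : ℝ) ^ ((1 : ℝ) / 2) * (2 * π) ^ ((3 : ℝ) / 2) * c2 * Real.Gamma (χ + 3 / 2))
    = 1 / (2 * π * Real.Gamma (χ + 3 / 2)) := by
  rw [show (2 : ℝ) ^ ((1 : ℝ) / 2) * (2 * π) ^ ((3 : ℝ) / 2) * c2 * Real.Gamma (χ + 3 / 2)
      = ((2 : ℝ) ^ ((1 : ℝ) / 2) * (2 * π) ^ ((3 : ℝ) / 2)) * (c2 * Real.Gamma (χ + 3 / 2)) by ring,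
    Kval]
  have hΓ : 0 < Real.Gamma (χ + 3/2) := Real.Gamma_pos_of_pos (by linarith)
  have hπ : (0:ℝ) < Real.sqrt π := Real.sqrt_pos.mpr pi_pos
  rw [div_eq_div_iff (by positivity) (by positivity)]
  ring

lemma inner_complex (hχ : -(3/4) < χ) (hc2 : 0 < c2) {t1 : ℝ} (ht1 : 0 < t1) :
    ∫ t2 : ℝ, (gFHK χ c1 c2 (t1, t2) : ℂ) * Complex.exp (Complex.I * ((t1 * x1 + t2 * x2 : ℝ) : ℂ))
      = ((1 / (2 * π * Real.Gamma (χ + 3 / 2)) : ℝ) : ℂ) * ((t1 ^ (χ + 1/2) : ℝ) : ℂ)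
        * Complex.exp (-(((c1 + c2 ^ 2 * x2 ^ 2 : ℝ) : ℂ) - Complex.I * (x1 : ℂ)) * (t1 : ℂ)) := by
  have hb : (0:ℝ) < 1 / (4 * c2 ^ 2 * t1) := by positivity
  have hbC : 0 < (((1 / (4 * c2 ^ 2 * t1) : ℝ)) : ℂ).re := by rw [Complex.ofReal_re]; exact hb
  have hpt : (fun t2 : ℝ => (gFHK χ c1 c2 (t1, t2) : ℂ)
        * Complex.exp (Complex.I * ((t1 * x1 + t2 * x2 : ℝ) : ℂ)))
      = fun t2 : ℝ => (((t1 ^ χ / ((2 : ℝ) ^ ((1 : ℝ) / 2) * (2 * π) ^ ((3 : ℝ) / 2) * c2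
            * Real.Gamma (χ + 3 / 2)) * Real.exp (-c1 * t1) : ℝ) : ℂ)
          * Complex.exp (Complex.I * ((t1 * x1 : ℝ) : ℂ)))
        * (Complex.exp (Complex.I * (x2 : ℂ) * (t2 : ℂ))
          * Complex.exp (-(((1 / (4 * c2 ^ 2 * t1) : ℝ)) : ℂ) * (t2 : ℂ) ^ 2)) := by
    funext t2
    rw [gFHK_pos_eq χ c1 c2 ht1 t2, Complex.ofReal_mul, Complex.ofReal_exp]
    rw [show ((-c1 * t1 - t2 ^ 2 / (4 * c2 ^ 2 * t1) : ℝ) : ℂ)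
        = ((-c1 * t1 : ℝ) : ℂ) + (-(((1 / (4 * c2 ^ 2 * t1) : ℝ)) : ℂ) * (t2 : ℂ) ^ 2) by
      push_cast; ring]
    rw [show (Complex.I * ((t1 * x1 + t2 * x2 : ℝ) : ℂ))
        = Complex.I * ((t1 * x1 : ℝ) : ℂ) + Complex.I * (x2 : ℂ) * (t2 : ℂ) by
      push_cast; ring]
    rw [Complex.exp_add, Complex.exp_add]
    push_cast
    ring
  rw [hpt, integral_const_mul, fourierIntegral_gaussian hbC ((x2 : ℂ))]
  have h1 : ((π : ℂ) / (((1 / (4 * c2 ^ 2 * t1) : ℝ)) : ℂ)) ^ ((1:ℂ)/2)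
      = ((2 * c2 * Real.sqrt π * Real.sqrt t1 : ℝ) : ℂ) := by
    rw [show ((π : ℂ) / (((1 / (4 * c2 ^ 2 * t1) : ℝ)) : ℂ)) = ((π / (1 / (4 * c2 ^ 2 * t1)) : ℝ) : ℂ) by
        push_cast; ring,
      show ((1:ℂ)/2) = (((1/2 : ℝ)) : ℂ) by norm_num,
      ← Complex.ofReal_cpow (by positivity)]
    rw [← Real.sqrt_eq_rpow, sqrt_pib c2 t1 hc2 ht1]
  have h2 : Complex.exp (-((x2:ℂ)) ^ 2 / (4 * (((1 / (4 * c2 ^ 2 * t1) : ℝ)) : ℂ)))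
      = ((Real.exp (-(c2 ^ 2 * x2 ^ 2) * t1) : ℝ) : ℂ) := by
    rw [Complex.ofReal_exp]
    congr 1
    have hc2' : (c2:ℂ) ≠ 0 := Complex.ofReal_ne_zero.mpr hc2.ne'
    have ht1' : (t1:ℂ) ≠ 0 := Complex.ofReal_ne_zero.mpr ht1.ne'
    push_cast
    field_simp
  rw [h1, h2]
  have hR : (t1 ^ χ / ((2 : ℝ) ^ ((1 : ℝ) / 2) * (2 * π) ^ ((3 : ℝ) / 2) * c2
        * Real.Gamma (χ + 3 / 2)) * Real.exp (-c1 * t1))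
      * ((2 * c2 * Real.sqrt π * Real.sqrt t1) * Real.exp (-(c2 ^ 2 * x2 ^ 2) * t1))
      = (1 / (2 * π * Real.Gamma (χ + 3 / 2))) * t1 ^ (χ + 1/2)
        * Real.exp (-((c1 + c2 ^ 2 * x2 ^ 2) * t1)) := by
    rw [← Kcoef χ c2 hχ hc2, Real.rpow_add ht1,
      show t1 ^ ((1:ℝ)/2) = Real.sqrt t1 from (Real.sqrt_eq_rpow t1).symm,
      show Real.exp (-((c1 + c2 ^ 2 * x2 ^ 2) * t1))
        = Real.exp (-c1 * t1) * Real.exp (-(c2 ^ 2 * x2 ^ 2) * t1) by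
        rw [← Real.exp_add]; ring_nf]
    ring
  calc (((t1 ^ χ / ((2 : ℝ) ^ ((1 : ℝ) / 2) * (2 * π) ^ ((3 : ℝ) / 2) * c2
            * Real.Gamma (χ + 3 / 2)) * Real.exp (-c1 * t1) : ℝ) : ℂ)
          * Complex.exp (Complex.I * ((t1 * x1 : ℝ) : ℂ)))
        * (((2 * c2 * Real.sqrt π * Real.sqrt t1 : ℝ) : ℂ)
          * ((Real.exp (-(c2 ^ 2 * x2 ^ 2) * t1) : ℝ) : ℂ))
      = (((t1 ^ χ / ((2 : ℝ) ^ ((1 : ℝ) / 2) * (2 * π) ^ ((3 : ℝ) / 2) * c2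
            * Real.Gamma (χ + 3 / 2)) * Real.exp (-c1 * t1))
          * ((2 * c2 * Real.sqrt π * Real.sqrt t1) * Real.exp (-(c2 ^ 2 * x2 ^ 2) * t1)) : ℝ) : ℂ)
          * Complex.exp (Complex.I * ((t1 * x1 : ℝ) : ℂ)) := by push_cast; ring
    _ = (((1 / (2 * π * Real.Gamma (χ + 3 / 2))) * t1 ^ (χ + 1/2)
          * Real.exp (-((c1 + c2 ^ 2 * x2 ^ 2) * t1)) : ℝ) : ℂ)
          * Complex.exp (Complex.I * ((t1 * x1 : ℝ) : ℂ)) := by rw [hR]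
    _ = ((1 / (2 * π * Real.Gamma (χ + 3 / 2)) : ℝ) : ℂ) * ((t1 ^ (χ + 1/2) : ℝ) : ℂ)
        * Complex.exp (-(((c1 + c2 ^ 2 * x2 ^ 2 : ℝ) : ℂ) - Complex.I * (x1 : ℂ)) * (t1 : ℂ)) := by
      rw [show (-(((c1 + c2 ^ 2 * x2 ^ 2 : ℝ) : ℂ) - Complex.I * (x1 : ℂ)) * (t1 : ℂ))
          = ((-((c1 + c2 ^ 2 * x2 ^ 2) * t1) : ℝ) : ℂ) + Complex.I * ((t1 * x1 : ℝ) : ℂ) by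
        push_cast; ring]
      rw [Complex.exp_add]
      push_cast
      ring

end aux3

end FHKaux

open Set Filter Complex in
theorem stmt_10 (χ c1 c2 : ℝ) (hχ : -(3 / 4) < χ) (hc1 : 0 < c1) (hc2 : 0 < c2) :
    ∀ x : ℝ × ℝ,
      (∫ t : ℝ × ℝ, (gFHK χ c1 c2 t : ℂ) * Complex.exp (Complex.I * ((t.1 * x.1 + t.2 * x.2 : ℝ) : ℂ)))
        = ((1 / (2 * π) : ℝ) : ℂ)
            * (((x.1 ^ 2 + (c1 + c2 ^ 2 * x.2 ^ 2) ^ 2) ^ (-(χ + 3 / 2) / 2) : ℝ) : ℂ)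
            * Complex.exp (Complex.I * (((χ + 3 / 2) * Real.arctan (x.1 / (c1 + c2 ^ 2 * x.2 ^ 2)) : ℝ) : ℂ)) ∧
      ‖(∫ t : ℝ × ℝ, (gFHK χ c1 c2 t : ℂ)
            * Complex.exp (Complex.I * ((t.1 * x.1 + t.2 * x.2 : ℝ) : ℂ)))‖ ^ 2
        = (1 / (2 * π) ^ 2) * (x.1 ^ 2 + (c1 + c2 ^ 2 * x.2 ^ 2) ^ 2) ^ (-(χ + 3 / 2)) := by
  rintro ⟨x1, x2⟩
  dsimp only
  have ha : (0:ℝ) < c1 + c2 ^ 2 * x2 ^ 2 := by positivity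
  have hΓ : 0 < Real.Gamma (χ + 3/2) := Real.Gamma_pos_of_pos (by linarith)
  have hmain : (∫ t : ℝ × ℝ, (gFHK χ c1 c2 t : ℂ)
        * Complex.exp (Complex.I * ((t.1 * x1 + t.2 * x2 : ℝ) : ℂ)))
      = ((1 / (2 * π) : ℝ) : ℂ)
          * (((x1 ^ 2 + (c1 + c2 ^ 2 * x2 ^ 2) ^ 2) ^ (-(χ + 3 / 2) / 2) : ℝ) : ℂ)
          * Complex.exp (Complex.I * (((χ + 3 / 2) * Real.arctan (x1 / (c1 + c2 ^ 2 * x2 ^ 2)) : ℝ) : ℂ)) := by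
    have hfub : (∫ t : ℝ × ℝ, (gFHK χ c1 c2 t : ℂ)
          * Complex.exp (Complex.I * ((t.1 * x1 + t.2 * x2 : ℝ) : ℂ)))
        = ∫ t1 : ℝ, ∫ t2 : ℝ, (gFHK χ c1 c2 (t1, t2) : ℂ)
            * Complex.exp (Complex.I * ((t1 * x1 + t2 * x2 : ℝ) : ℂ)) := by
      rw [show (volume : Measure (ℝ × ℝ)) = volume.prod volume from Measure.volume_eq_prod ℝ ℝ]
      exact integral_prod _ (by
        rw [← show (volume : Measure (ℝ × ℝ)) = volume.prod volume from Measure.volume_eq_prod ℝ ℝ]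
        exact FF_integrable χ c1 c2 x1 x2 hχ hc1 hc2)
    rw [hfub]
    have houter : ∀ t1 : ℝ, (∫ t2 : ℝ, (gFHK χ c1 c2 (t1, t2) : ℂ)
          * Complex.exp (Complex.I * ((t1 * x1 + t2 * x2 : ℝ) : ℂ)))
        = Set.indicator (Set.Ioi (0:ℝ))
            (fun u : ℝ => ((1 / (2 * π * Real.Gamma (χ + 3 / 2)) : ℝ) : ℂ) * ((u ^ (χ + 1/2) : ℝ) : ℂ)
              * Complex.exp (-(((c1 + c2 ^ 2 * x2 ^ 2 : ℝ) : ℂ) - Complex.I * (x1 : ℂ)) * (u : ℂ))) t1 := by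
      intro t1
      by_cases ht1 : 0 < t1
      · rw [Set.indicator_of_mem (mem_Ioi.mpr ht1)]
        exact inner_complex χ c1 c2 x1 x2 hχ hc2 ht1
      · rw [Set.indicator_of_notMem (by simpa using ht1)]
        have : (fun t2 : ℝ => (gFHK χ c1 c2 (t1, t2) : ℂ)
            * Complex.exp (Complex.I * ((t1 * x1 + t2 * x2 : ℝ) : ℂ))) = fun _ => (0:ℂ) := by
          funext t2
          rw [gFHK_nonpos_eq χ c1 c2 ht1 t2]
          simp
        rw [this, integral_const]
        simp
    simp only [houter]
    rw [integral_indicator measurableSet_Ioi]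
    simp_rw [mul_assoc]
    rw [integral_const_mul]
    have hsub : ∫ t1 : ℝ in Set.Ioi (0:ℝ), ((t1 ^ (χ + 1/2) : ℝ) : ℂ)
          * Complex.exp (-(((c1 + c2 ^ 2 * x2 ^ 2 : ℝ) : ℂ) - Complex.I * (x1 : ℂ)) * (t1 : ℂ))
        = GG (χ + 3/2) (((c1 + c2 ^ 2 * x2 ^ 2 : ℝ) : ℂ) - Complex.I * (x1 : ℂ)) := by
      unfold GG
      apply setIntegral_congr_fun measurableSet_Ioi
      intro t ht
      have ht' : (0:ℝ) < t := ht
      dsimp only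
      congr 1
      rw [Complex.ofReal_cpow ht'.le]
      congr 1
      push_cast
      ring
    rw [hsub, GG_eq (χ + 3/2) (by linarith) (by rw [Complex.sub_re, Complex.ofReal_re]; simp; linarith)]
    rw [cpow_polar (χ + 3/2) (c1 + c2 ^ 2 * x2 ^ 2) x1 ha]
    have hCoef : ((1 / (2 * π * Real.Gamma (χ + 3 / 2)) : ℝ) : ℂ)
        * ((Real.Gamma (χ + 3/2) : ℝ) : ℂ) = ((1 / (2 * π) : ℝ) : ℂ) := by
      rw [← Complex.ofReal_mul]
      congr 1
      rw [div_mul_eq_mul_div, one_mul, div_eq_div_iff (by positivity) (by positivity)]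
      ring
    rw [← hCoef]
    ring
  refine ⟨hmain, ?_⟩
  rw [hmain]
  rw [norm_mul, norm_mul, Complex.norm_real, Complex.norm_real, Real.norm_eq_abs, Real.norm_eq_abs, Complex.norm_exp]
  rw [show (Complex.I * (((χ + 3 / 2) * Real.arctan (x1 / (c1 + c2 ^ 2 * x2 ^ 2)) : ℝ) : ℂ)).re = 0 from by
    rw [Complex.mul_re, Complex.I_re, Complex.I_im, Complex.ofReal_re, Complex.ofReal_im]; ring]
  rw [Real.exp_zero, mul_one]
  rw [_root_.abs_of_nonneg (by positivity : (0:ℝ) ≤ 1 / (2*π)),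
    _root_.abs_of_nonneg (Real.rpow_nonneg (by positivity) _)]
  rw [mul_pow]
  congr 1
  · rw [div_pow]; norm_num
  · rw [← Real.rpow_natCast ((x1 ^ 2 + (c1 + c2 ^ 2 * x2 ^ 2) ^ 2) ^ (-(χ + 3 / 2) / 2)) 2,
      ← Real.rpow_mul (by positivity)]
    congr 1
    push_cast
    ring
end

section
/- Let 0 < α ≤ 2, p1, p2 > 0, P = 1/p1 + 1/p2 with α/(1+α) < P < α and P ≠ 1, and let g0 : ℝ²∖{0} → ℝ be measurable with |g0(u)| ≤ C ρ0(u)^{P−1} and |∂_{12} g0(u)| ≤ C ρ0(u)^{−1} for all u ≠ 0, where ρ0(u) = |u1|^{p1} + |u2|^{p2}. Then for every t ∈ (0,∞)², the rectangular increment h0(t;u) := g0(t1−u1, t2−u2) − g0(−u1, t2−u2) − g0(t1−u1, −u2) + g0(−u1,−u2) satisfies ∫_{ℝ²} |h0(t;u)|^α du < ∞. -/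
open MeasureTheory

/-- `ρ₀(u) = |u₁|^{p₁} + |u₂|^{p₂}`. -/
noncomputable def rho0 (p1 p2 : ℝ) (u : ℝ × ℝ) : ℝ := |u.1| ^ p1 + |u.2| ^ p2

/-- Mixed partial derivative `∂₁₂ g`. -/
noncomputable def pd12 (g : ℝ × ℝ → ℝ) (u : ℝ × ℝ) : ℝ :=
  deriv (fun b => deriv (fun a => g (a, b)) u.1) u.2

open Set

section Aux

lemma aux_abs_rpow_ii {γ : ℝ} (hγ : -1 < γ) (a b : ℝ) :
    IntervalIntegrable (fun x : ℝ => |x| ^ γ) volume a b := by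
  have key : ∀ c : ℝ, 0 ≤ c → IntervalIntegrable (fun x : ℝ => |x| ^ γ) volume 0 c := by
    intro c hc
    have h1 : IntervalIntegrable (fun x : ℝ => x ^ γ) volume 0 c :=
      intervalIntegral.intervalIntegrable_rpow' hγ
    refine h1.congr ?_
    intro x hx
    rw [uIoc_of_le hc] at hx
    simp only [abs_of_pos hx.1]
  have key2 : ∀ c : ℝ, IntervalIntegrable (fun x : ℝ => |x| ^ γ) volume 0 c := by
    intro c
    rcases le_total 0 c with h | h
    · exact key c h
    · have := (key (-c) (by linarith)).symm
      have h2 := (IntervalIntegrable.iff_comp_neg (by simp)).mp this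
      simpa using h2.symm
  exact ((key2 a).symm.trans (key2 b))

lemma aux_abs_rpow_int_Icc {γ : ℝ} (hγ : -1 < γ) (a l r : ℝ) (hlr : l ≤ r) :
    IntegrableOn (fun x : ℝ => |x - a| ^ γ) (Icc l r) volume := by
  have h0 : IntervalIntegrable (fun x : ℝ => |x| ^ γ) volume (l - a) (r - a) :=
    aux_abs_rpow_ii hγ _ _
  have h1 := h0.comp_sub_right a
  rw [sub_add_cancel, sub_add_cancel] at h1
  exact (intervalIntegrable_iff_integrableOn_Icc_of_le hlr).mp h1

lemma aux_abs_rpow_tail {q M : ℝ} (hq : q < -1) (hM : 0 < M) :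
    IntegrableOn (fun x : ℝ => |x| ^ q) {x : ℝ | M < |x|} volume := by
  have hIoi : IntegrableOn (fun x : ℝ => |x| ^ q) (Ioi M) volume := by
    have h1 : IntegrableOn (fun x : ℝ => x ^ q) (Ioi M) volume :=
      integrableOn_Ioi_rpow_of_lt hq hM
    refine h1.congr_fun (fun x hx => ?_) measurableSet_Ioi
    rw [abs_of_pos (hM.trans hx)]
  have hIio : IntegrableOn (fun x : ℝ => |x| ^ q) (Iio (-M)) volume := by
    have h2 : Integrable ((Ioi M).indicator (fun x : ℝ => |x| ^ q)) volume :=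
      (integrable_indicator_iff measurableSet_Ioi).2 hIoi
    have h3 := h2.comp_neg
    have h4 : (fun x : ℝ => (Ioi M).indicator (fun x : ℝ => |x| ^ q) (-x))
        = (Iio (-M)).indicator (fun x : ℝ => |x| ^ q) := by
      funext x
      simp [indicator_apply, mem_Ioi, mem_Iio, abs_neg, lt_neg]
    rw [h4] at h3
    exact (integrable_indicator_iff measurableSet_Iio).1 h3
  have hset : {x : ℝ | M < |x|} = Iio (-M) ∪ Ioi M := by
    ext x; simp [lt_abs, or_comm, lt_neg]
  rw [hset]
  exact hIio.union hIoi

lemma aux_prod_int {f g : ℝ → ℝ} {s t : Set ℝ} (hf : IntegrableOn f s volume)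
    (hg : IntegrableOn g t volume) :
    IntegrableOn (fun u : ℝ × ℝ => f u.1 * g u.2) (s ×ˢ t) volume := by
  rw [IntegrableOn, Measure.volume_eq_prod, ← Measure.prod_restrict]
  exact hf.mul_prod hg

lemma aux_amgm {X Y s : ℝ} (hX : 0 ≤ X) (hY : 0 ≤ Y) (hs0 : 0 ≤ s) (hs1 : s ≤ 1) :
    X ^ s * Y ^ (1 - s) ≤ X + Y := by
  have h := Real.geom_mean_le_arith_mean2_weighted hs0 (by linarith : (0:ℝ) ≤ 1 - s) hX hY
    (by ring)
  refine h.trans ?_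
  nlinarith [mul_nonneg hs0 hX, mul_nonneg (by linarith : (0:ℝ) ≤ 1 - s) hY]

lemma aux_two_rpow {a b α : ℝ} (ha : 0 ≤ a) (hb : 0 ≤ b) (hα : 0 ≤ α) :
    (a + b) ^ α ≤ 2 ^ α * (a ^ α + b ^ α) := by
  rcases le_total a b with h | h
  · calc (a + b) ^ α ≤ (2 * b) ^ α :=
          Real.rpow_le_rpow (by linarith) (by linarith) hα
      _ = 2 ^ α * b ^ α := Real.mul_rpow (by norm_num) hb
      _ ≤ 2 ^ α * (a ^ α + b ^ α) := by
          have := Real.rpow_nonneg ha α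
          have h2 := Real.rpow_nonneg (le_trans (by norm_num : (0:ℝ) ≤ 2) (by norm_num : (2:ℝ) ≤ 2)) α
          nlinarith [Real.rpow_nonneg (show (0:ℝ) ≤ 2 by norm_num) α]
  · calc (a + b) ^ α ≤ (2 * a) ^ α :=
          Real.rpow_le_rpow (by linarith) (by linarith) hα
      _ = 2 ^ α * a ^ α := Real.mul_rpow (by norm_num) ha
      _ ≤ 2 ^ α * (a ^ α + b ^ α) := by
          nlinarith [Real.rpow_nonneg hb α, Real.rpow_nonneg (show (0:ℝ) ≤ 2 by norm_num) α]

lemma aux_mvt_rect {g : ℝ × ℝ → ℝ} (hsm : ContDiffOn ℝ 2 g {(0 : ℝ × ℝ)}ᶜ)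
    {a b c d K : ℝ} (hab : a ≤ b) (hcd : c ≤ d)
    (hQ : ∀ w : ℝ × ℝ, w.1 ∈ Icc a b → w.2 ∈ Icc c d → w ≠ 0)
    (hbd : ∀ w : ℝ × ℝ, w.1 ∈ Icc a b → w.2 ∈ Icc c d → |pd12 g w| ≤ K) :
    |g (b, d) - g (a, d) - g (b, c) + g (a, c)| ≤ K * (b - a) * (d - c) := by
  have hopen : IsOpen {(0 : ℝ × ℝ)}ᶜ := isOpen_compl_singleton
  set D1 : ℝ × ℝ → ℝ := fun w => fderiv ℝ g w (1, 0) with hD1def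
  have hD1cd : ContDiffOn ℝ 1 (fderiv ℝ g) {(0 : ℝ × ℝ)}ᶜ :=
    hsm.fderiv_of_isOpen hopen (by norm_num)
  have claimA : ∀ w : ℝ × ℝ, w ≠ 0 → HasDerivAt (fun x => g (x, w.2)) (D1 w) w.1 := by
    intro w hw
    have hd : DifferentiableAt ℝ g w :=
      ((hsm.contDiffAt (hopen.mem_nhds hw)).differentiableAt (by norm_num))
    have hcurve : HasDerivAt (fun x : ℝ => (x, w.2)) ((1 : ℝ), (0 : ℝ)) w.1 :=
      (hasDerivAt_id _).prodMk (hasDerivAt_const _ _)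
    have h := hd.hasFDerivAt.comp_hasDerivAt w.1 (by simpa using hcurve)
    exact h
  have claimB : ∀ w : ℝ × ℝ, w ≠ 0 → DifferentiableAt ℝ (fderiv ℝ g) w := by
    intro w hw
    exact ((hD1cd.contDiffAt (hopen.mem_nhds hw)).differentiableAt (by norm_num))
  have claimC : ∀ w : ℝ × ℝ, w ≠ 0 → HasDerivAt (fun y => D1 (w.1, y)) (pd12 g w) w.2 := by
    intro w hw
    have hcurve : DifferentiableAt ℝ (fun y : ℝ => ((w.1, y) : ℝ × ℝ)) w.2 :=
      (differentiableAt_const _).prodMk differentiableAt_id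
    have hw' : ((w.1, w.2) : ℝ × ℝ) ≠ 0 := by rwa [Prod.mk.eta]
    have hA : DifferentiableAt ℝ (fun y => fderiv ℝ g (w.1, y)) w.2 :=
      (claimB (w.1, w.2) hw').comp w.2 hcurve
    have hF : DifferentiableAt ℝ (fun y => D1 (w.1, y)) w.2 :=
      hA.clm_apply (differentiableAt_const _)
    have hm : HasDerivAt (fun y => D1 (w.1, y)) (deriv (fun y => D1 (w.1, y)) w.2) w.2 :=
      hF.hasDerivAt
    have hnb : ∀ᶠ y in nhds w.2, ((w.1, y) : ℝ × ℝ) ∈ ({(0 : ℝ × ℝ)}ᶜ : Set (ℝ × ℝ)) := by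
      have hcont : ContinuousAt (fun y : ℝ => ((w.1, y) : ℝ × ℝ)) w.2 :=
        (continuous_const.prodMk continuous_id).continuousAt
      exact hcont.eventually_mem (hopen.mem_nhds hw')
    have heq : (fun y => deriv (fun x => g (x, y)) w.1) =ᶠ[nhds w.2] (fun y => D1 (w.1, y)) := by
      filter_upwards [hnb] with y hy
      exact ((claimA (w.1, y) hy).deriv)
    have hm' : HasDerivAt (fun y => deriv (fun x => g (x, y)) w.1)
        (deriv (fun y => D1 (w.1, y)) w.2) w.2 := hm.congr_of_eventuallyEq heq
    have hpd : pd12 g w = deriv (fun y => D1 (w.1, y)) w.2 := by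
      rw [pd12]
      exact hm'.deriv
    rw [hpd]
    exact hm
  have step2 : ∀ x ∈ Icc a b, |D1 (x, d) - D1 (x, c)| ≤ K * (d - c) := by
    intro x hx
    have h := Convex.norm_image_sub_le_of_norm_hasDerivWithin_le
      (f := fun y => D1 (x, y)) (f' := fun y => pd12 g (x, y)) (s := Icc c d) (C := K)
      (fun y hy => (claimC (x, y) (hQ (x, y) hx hy)).hasDerivWithinAt)
      (fun y hy => by simpa [Real.norm_eq_abs] using hbd (x, y) hx hy)
      (convex_Icc c d) (left_mem_Icc.2 hcd) (right_mem_Icc.2 hcd)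
    rw [Real.norm_eq_abs, Real.norm_eq_abs, abs_of_nonneg (by linarith : (0:ℝ) ≤ d - c)] at h
    exact h
  have step3 := Convex.norm_image_sub_le_of_norm_hasDerivWithin_le
    (f := fun x => g (x, d) - g (x, c)) (f' := fun x => D1 (x, d) - D1 (x, c))
    (s := Icc a b) (C := K * (d - c))
    (fun x hx => (((claimA (x, d) (hQ (x, d) hx (right_mem_Icc.2 hcd))).sub
        (claimA (x, c) (hQ (x, c) hx (left_mem_Icc.2 hcd))))).hasDerivWithinAt)
    (fun x hx => by simpa [Real.norm_eq_abs] using step2 x hx)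
    (convex_Icc a b) (left_mem_Icc.2 hab) (right_mem_Icc.2 hab)
  rw [Real.norm_eq_abs, Real.norm_eq_abs, abs_of_nonneg (by linarith : (0:ℝ) ≤ b - a)] at step3
  calc |g (b, d) - g (a, d) - g (b, c) + g (a, c)|
      = |g (b, d) - g (b, c) - (g (a, d) - g (a, c))| := by ring_nf
    _ ≤ K * (d - c) * (b - a) := step3
    _ = K * (b - a) * (d - c) := by ring
end Aux

lemma aux_split {p1 p2 s E x1 x2 : ℝ} (hx1 : 0 < x1) (hx2 : 0 < x2)
    (hs0 : 0 ≤ s) (hs1 : s ≤ 1) (hE : E ≤ 0) :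
    (x1 ^ p1 + x2 ^ p2) ^ E ≤ x1 ^ (p1 * (s * E)) * x2 ^ (p2 * ((1 - s) * E)) := by
  have hX : 0 < x1 ^ p1 := Real.rpow_pos_of_pos hx1 _
  have hY : 0 < x2 ^ p2 := Real.rpow_pos_of_pos hx2 _
  have hgm : 0 < (x1 ^ p1) ^ s * (x2 ^ p2) ^ (1 - s) :=
    mul_pos (Real.rpow_pos_of_pos hX _) (Real.rpow_pos_of_pos hY _)
  have h1 : (x1 ^ p1 + x2 ^ p2) ^ E ≤ ((x1 ^ p1) ^ s * (x2 ^ p2) ^ (1 - s)) ^ E :=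
    Real.rpow_le_rpow_of_nonpos hgm (aux_amgm hX.le hY.le hs0 hs1) hE
  refine h1.trans (le_of_eq ?_)
  rw [Real.mul_rpow (Real.rpow_nonneg hX.le _) (Real.rpow_nonneg hY.le _),
    ← Real.rpow_mul hX.le, ← Real.rpow_mul hY.le,
    ← Real.rpow_mul hx1.le, ← Real.rpow_mul hx2.le]


set_option maxHeartbeats 1000000 in
theorem stmt_11 (α p1 p2 C : ℝ) (hα0 : 0 < α) (hα2 : α ≤ 2)
    (hp1 : 0 < p1) (hp2 : 0 < p2)
    (hPlow : α / (1 + α) < 1 / p1 + 1 / p2) (hPhigh : 1 / p1 + 1 / p2 < α)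
    (hPne : 1 / p1 + 1 / p2 ≠ 1) (hC : 0 < C)
    (g0 : ℝ × ℝ → ℝ) (hmeas : Measurable g0)
    (hsm : ContDiffOn ℝ 2 g0 {(0 : ℝ × ℝ)}ᶜ)
    (hg : ∀ u : ℝ × ℝ, u ≠ 0 → |g0 u| ≤ C * rho0 p1 p2 u ^ (1 / p1 + 1 / p2 - 1))
    (hD : ∀ u : ℝ × ℝ, u ≠ 0 → |pd12 g0 u| ≤ C * (rho0 p1 p2 u)⁻¹) :
    ∀ t : ℝ × ℝ, 0 < t.1 → 0 < t.2 →
      Integrable (fun u : ℝ × ℝ =>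
        |g0 (t.1 - u.1, t.2 - u.2) - g0 (-u.1, t.2 - u.2)
          - g0 (t.1 - u.1, -u.2) + g0 (-u.1, -u.2)| ^ α) volume := by
  intro t ht1 ht2
  -- basic positivity
  have hp1' : 0 < 1 / p1 := by positivity
  have hp2' : 0 < 1 / p2 := by positivity
  set P : ℝ := 1 / p1 + 1 / p2 with hPdef
  have hP0 : 0 < P := by positivity
  set β : ℝ := (P - 1) * α with hβdef
  have hβP : -P < β := by
    have h1 : α < P * (1 + α) := (div_lt_iff₀ (by linarith)).mp hPlow
    nlinarith
  -- the integrand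
  set f : ℝ × ℝ → ℝ := fun u =>
    |g0 (t.1 - u.1, t.2 - u.2) - g0 (-u.1, t.2 - u.2)
      - g0 (t.1 - u.1, -u.2) + g0 (-u.1, -u.2)| ^ α with hfdef
  have hfnn : ∀ u, 0 ≤ f u := fun u => Real.rpow_nonneg (abs_nonneg _) _
  have hfmeas : Measurable f := by
    apply Measurable.comp (Real.continuous_rpow_const hα0.le).measurable
    apply Measurable.abs
    exact (((hmeas.comp ((measurable_const.sub measurable_fst).prodMk
        (measurable_const.sub measurable_snd))).sub
      (hmeas.comp (measurable_fst.neg.prodMk (measurable_const.sub measurable_snd)))).sub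
      (hmeas.comp ((measurable_const.sub measurable_fst).prodMk measurable_snd.neg))).add
      (hmeas.comp (measurable_fst.neg.prodMk measurable_snd.neg))
  -- geometry
  set R : ℝ := 2 * (t.1 + t.2) + 1 with hRdef
  have hR0 : 0 < R := by rw [hRdef]; linarith
  have hRt1 : 2 * t.1 < R := by rw [hRdef]; linarith
  have hRt2 : 2 * t.2 < R := by rw [hRdef]; linarith
  set S : Set (ℝ × ℝ) := Icc (-R) R ×ˢ Icc (-R) R with hSdef
  set A1 : Set (ℝ × ℝ) := {x : ℝ | R < |x|} ×ˢ Icc (-(2 * t.2)) (2 * t.2) with hA1def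
  set A2 : Set (ℝ × ℝ) := {x : ℝ | R < |x|} ×ˢ {y : ℝ | 2 * t.2 < |y|} with hA2def
  set A3 : Set (ℝ × ℝ) := Icc (-(2 * t.1)) (2 * t.1) ×ˢ {y : ℝ | R < |y|} with hA3def
  set A4 : Set (ℝ × ℝ) := {x : ℝ | 2 * t.1 < |x|} ×ˢ {y : ℝ | R < |y|} with hA4def
  have hmt : ∀ M : ℝ, MeasurableSet {x : ℝ | M < |x|} := fun M =>
    measurableSet_lt measurable_const measurable_abs
  have hSm : MeasurableSet S := measurableSet_Icc.prod measurableSet_Icc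
  have hA1m : MeasurableSet A1 := (hmt R).prod measurableSet_Icc
  have hA2m : MeasurableSet A2 := (hmt R).prod (hmt _)
  have hA3m : MeasurableSet A3 := measurableSet_Icc.prod (hmt R)
  have hA4m : MeasurableSet A4 := (hmt _).prod (hmt R)
  -- ### tail pointwise bound
  set c0 : ℝ := (C * (t.1 * t.2)) ^ α with hc0def
  have hc0 : 0 ≤ c0 := Real.rpow_nonneg (by positivity) _
  have hrect : ∀ T u1 x : ℝ, 0 < T → x ∈ Icc (-u1) (T - u1) → |u1| - T ≤ |x| := by
    intro T u1 x hT hx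
    have h1 : 0 ≤ x + u1 := by linarith [hx.1]
    have h2 : x + u1 ≤ T := by linarith [hx.2]
    have h3 := abs_sub_abs_le_abs_sub u1 (x + u1)
    rw [show u1 - (x + u1) = -x by ring, abs_neg] at h3
    have h4 : |x + u1| ≤ T := abs_le.2 ⟨by linarith, h2⟩
    linarith
  have key_tail : ∀ u : ℝ × ℝ, (t.1 < |u.1| ∨ t.2 < |u.2|) →
      f u ≤ c0 * (max (|u.1| - t.1) 0 ^ p1 + max (|u.2| - t.2) 0 ^ p2) ^ (-α) := by
    intro u hu
    set m1 : ℝ := max (|u.1| - t.1) 0 with hm1def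
    set m2 : ℝ := max (|u.2| - t.2) 0 with hm2def
    set V : ℝ := m1 ^ p1 + m2 ^ p2 with hVdef
    have hm1n : 0 ≤ m1 := le_max_right _ _
    have hm2n : 0 ≤ m2 := le_max_right _ _
    have hV0 : 0 < V := by
      rcases hu with h | h
      · have h5 : 0 < m1 := lt_max_of_lt_left (by linarith)
        have := Real.rpow_pos_of_pos h5 p1
        have := Real.rpow_nonneg hm2n p2
        rw [hVdef]; linarith
      · have h5 : 0 < m2 := lt_max_of_lt_left (by linarith)
        have := Real.rpow_pos_of_pos h5 p2
        have := Real.rpow_nonneg hm1n p1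
        rw [hVdef]; linarith
    have hQ : ∀ w : ℝ × ℝ, w.1 ∈ Icc (-u.1) (t.1 - u.1) → w.2 ∈ Icc (-u.2) (t.2 - u.2) →
        w ≠ 0 := by
      intro w hw1 hw2 h0
      have hz1 : w.1 = 0 := by rw [h0]; rfl
      have hz2 : w.2 = 0 := by rw [h0]; rfl
      rcases hu with h | h
      · have := hrect t.1 u.1 w.1 ht1 hw1
        rw [hz1] at this; simp at this; linarith
      · have := hrect t.2 u.2 w.2 ht2 hw2
        rw [hz2] at this; simp at this; linarith
    have hbd : ∀ w : ℝ × ℝ, w.1 ∈ Icc (-u.1) (t.1 - u.1) → w.2 ∈ Icc (-u.2) (t.2 - u.2) →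
        |pd12 g0 w| ≤ C * V⁻¹ := by
      intro w hw1 hw2
      have hw0 := hQ w hw1 hw2
      have h1 := hD w hw0
      have hph : V ≤ rho0 p1 p2 w := by
        have e1 : m1 ≤ |w.1| := max_le (by linarith [hrect t.1 u.1 w.1 ht1 hw1]) (abs_nonneg _)
        have e2 : m2 ≤ |w.2| := max_le (by linarith [hrect t.2 u.2 w.2 ht2 hw2]) (abs_nonneg _)
        exact add_le_add (Real.rpow_le_rpow hm1n e1 hp1.le) (Real.rpow_le_rpow hm2n e2 hp2.le)
      have h2 : (rho0 p1 p2 w)⁻¹ ≤ V⁻¹ := inv_anti₀ hV0 hph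
      exact h1.trans (mul_le_mul_of_nonneg_left h2 hC.le)
    have hmvt := aux_mvt_rect hsm (show -u.1 ≤ t.1 - u.1 by linarith)
      (show -u.2 ≤ t.2 - u.2 by linarith) hQ hbd
    rw [show t.1 - u.1 - -u.1 = t.1 by ring, show t.2 - u.2 - -u.2 = t.2 by ring] at hmvt
    have h5 := Real.rpow_le_rpow (abs_nonneg _) hmvt hα0.le
    refine h5.trans (le_of_eq ?_)
    rw [show C * V⁻¹ * t.1 * t.2 = C * (t.1 * t.2) * V⁻¹ by ring,
      Real.mul_rpow (by positivity) (inv_nonneg.2 hV0.le),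
      Real.inv_rpow hV0.le, ← Real.rpow_neg hV0.le]
  -- ### near pointwise bound
  set cN : ℝ := C ^ α * (2 ^ α * 2 ^ α) with hcNdef
  have hcN : 0 ≤ cN := by
    have := Real.rpow_nonneg hC.le α
    have := Real.rpow_nonneg (show (0:ℝ) ≤ 2 by norm_num) α
    positivity
  have key_near : ∀ u : ℝ × ℝ, u.1 ≠ 0 → u.1 ≠ t.1 → u.2 ≠ 0 → u.2 ≠ t.2 →
      f u ≤ cN *
          ((|t.1 - u.1| ^ p1 + |t.2 - u.2| ^ p2) ^ β
            + (|u.1| ^ p1 + |t.2 - u.2| ^ p2) ^ β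
            + (|t.1 - u.1| ^ p1 + |u.2| ^ p2) ^ β
            + (|u.1| ^ p1 + |u.2| ^ p2) ^ β) := by
    intro u h1 h2 h3 h4
    have hne : ∀ a b : ℝ, a ≠ 0 → ((a, b) : ℝ × ℝ) ≠ 0 := by
      intro a b ha h0
      exact ha (by rw [Prod.ext_iff] at h0; exact h0.1)
    have hw1 : ((t.1 - u.1, t.2 - u.2) : ℝ × ℝ) ≠ 0 := hne _ _ (sub_ne_zero.2 (Ne.symm h2))
    have hw2 : ((-u.1, t.2 - u.2) : ℝ × ℝ) ≠ 0 := hne _ _ (neg_ne_zero.2 h1)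
    have hw3 : ((t.1 - u.1, -u.2) : ℝ × ℝ) ≠ 0 := hne _ _ (sub_ne_zero.2 (Ne.symm h2))
    have hw4 : ((-u.1, -u.2) : ℝ × ℝ) ≠ 0 := hne _ _ (neg_ne_zero.2 h1)
    set y1 : ℝ := (|t.1 - u.1| ^ p1 + |t.2 - u.2| ^ p2) ^ (P - 1) with hy1
    set y2 : ℝ := (|u.1| ^ p1 + |t.2 - u.2| ^ p2) ^ (P - 1) with hy2
    set y3 : ℝ := (|t.1 - u.1| ^ p1 + |u.2| ^ p2) ^ (P - 1) with hy3
    set y4 : ℝ := (|u.1| ^ p1 + |u.2| ^ p2) ^ (P - 1) with hy4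
    have hb1 := hg _ hw1
    have hb2 := hg _ hw2
    have hb3 := hg _ hw3
    have hb4 := hg _ hw4
    simp only [rho0, abs_neg] at hb1 hb2 hb3 hb4
    have hXle : |g0 (t.1 - u.1, t.2 - u.2) - g0 (-u.1, t.2 - u.2)
        - g0 (t.1 - u.1, -u.2) + g0 (-u.1, -u.2)| ≤ C * ((y1 + y2) + (y3 + y4)) := by
      have c1 := abs_add_le (g0 (t.1 - u.1, t.2 - u.2) - g0 (-u.1, t.2 - u.2)
        - g0 (t.1 - u.1, -u.2)) (g0 (-u.1, -u.2))
      have c2 := abs_sub (g0 (t.1 - u.1, t.2 - u.2) - g0 (-u.1, t.2 - u.2))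
        (g0 (t.1 - u.1, -u.2))
      have c3 := abs_sub (g0 (t.1 - u.1, t.2 - u.2)) (g0 (-u.1, t.2 - u.2))
      nlinarith [hb1, hb2, hb3, hb4, hC.le]
    have hy1n : 0 ≤ y1 := Real.rpow_nonneg (by positivity) _
    have hy2n : 0 ≤ y2 := Real.rpow_nonneg (by positivity) _
    have hy3n : 0 ≤ y3 := Real.rpow_nonneg (by positivity) _
    have hy4n : 0 ≤ y4 := Real.rpow_nonneg (by positivity) _
    have step1 := Real.rpow_le_rpow (abs_nonneg _) hXle hα0.le
    rw [Real.mul_rpow hC.le (by linarith)] at step1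
    have step2 := aux_two_rpow (by linarith : (0:ℝ) ≤ y1 + y2) (by linarith : (0:ℝ) ≤ y3 + y4)
      hα0.le
    have step3 := aux_two_rpow hy1n hy2n hα0.le
    have step4 := aux_two_rpow hy3n hy4n hα0.le
    have h2a : (0:ℝ) ≤ 2 ^ α := Real.rpow_nonneg (by norm_num) _
    have hCa : (0:ℝ) ≤ C ^ α := Real.rpow_nonneg hC.le _
    have hz1 : y1 ^ α = (|t.1 - u.1| ^ p1 + |t.2 - u.2| ^ p2) ^ β := by
      rw [hy1, hβdef, Real.rpow_mul (by positivity)]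
    have hz2 : y2 ^ α = (|u.1| ^ p1 + |t.2 - u.2| ^ p2) ^ β := by
      rw [hy2, hβdef, Real.rpow_mul (by positivity)]
    have hz3 : y3 ^ α = (|t.1 - u.1| ^ p1 + |u.2| ^ p2) ^ β := by
      rw [hy3, hβdef, Real.rpow_mul (by positivity)]
    have hz4 : y4 ^ α = (|u.1| ^ p1 + |u.2| ^ p2) ^ β := by
      rw [hy4, hβdef, Real.rpow_mul (by positivity)]
    rw [← hz1, ← hz2, ← hz3, ← hz4]
    calc f u ≤ C ^ α * (y1 + y2 + (y3 + y4)) ^ α := step1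
      _ ≤ C ^ α * (2 ^ α * ((y1 + y2) ^ α + (y3 + y4) ^ α)) :=
          mul_le_mul_of_nonneg_left step2 hCa
      _ ≤ C ^ α * (2 ^ α * ((2 ^ α * (y1 ^ α + y2 ^ α)) + (2 ^ α * (y3 ^ α + y4 ^ α)))) := by
          have h6 := add_le_add step3 step4
          exact mul_le_mul_of_nonneg_left (mul_le_mul_of_nonneg_left h6 h2a) hCa
      _ = cN * (y1 ^ α + y2 ^ α + y3 ^ α + y4 ^ α) := by rw [hcNdef]; ring
  -- ### arithmetic for tail exponents
  have hPhigh' : 1/p1 + 1/p2 < α := by rw [← hPdef]; exact hPhigh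
  have hp1α : 1 < p1 * α := by
    have h7 : 1 / p1 < α := by linarith [hPhigh', hp2']
    rw [div_lt_iff₀ hp1] at h7
    nlinarith
  have hp2α : 1 < p2 * α := by
    have h7 : 1 / p2 < α := by linarith [hPhigh', hp1']
    rw [div_lt_iff₀ hp2] at h7
    nlinarith
  have hsumlt : 1/(p1*α) + 1/(p2*α) < 1 := by
    have e : 1/(p1*α) + 1/(p2*α) = P/α := by rw [hPdef]; field_simp
    rw [e, div_lt_one hα0]
    exact hPhigh
  obtain ⟨s, hs0, hs1, hq1, hq2⟩ : ∃ s : ℝ, 0 ≤ s ∧ s ≤ 1 ∧ 1 < p1 * (s * α)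
      ∧ 1 < p2 * ((1 - s) * α) := by
    have hA : 0 < 1/(p1*α) := by positivity
    have hB : 0 < 1/(p2*α) := by positivity
    have hδ0 : 0 < (1 - 1/(p1*α) - 1/(p2*α))/2 := by linarith
    refine ⟨1/(p1*α) + (1 - 1/(p1*α) - 1/(p2*α))/2, by linarith, by linarith, ?_, ?_⟩
    · have e : p1 * ((1/(p1*α) + (1 - 1/(p1*α) - 1/(p2*α))/2) * α)
          = 1 + (1 - 1/(p1*α) - 1/(p2*α))/2 * (p1*α) := by field_simp
      rw [e]
      have := mul_pos hδ0 (show (0:ℝ) < p1*α by positivity)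
      linarith
    · have e : p2 * ((1 - (1/(p1*α) + (1 - 1/(p1*α) - 1/(p2*α))/2)) * α)
          = 1 + (1 - 1/(p1*α) - 1/(p2*α))/2 * (p2*α) := by field_simp; ring
      rw [e]
      have := mul_pos hδ0 (show (0:ℝ) < p2*α by positivity)
      linarith
  set E1 : ℝ := p1 * (s * -α) with hE1def
  set E2 : ℝ := p2 * ((1 - s) * -α) with hE2def
  have hE1 : E1 < -1 := by
    have e : E1 = -(p1 * (s * α)) := by rw [hE1def]; ring
    rw [e]; linarith
  have hE2 : E2 < -1 := by
    have e : E2 = -(p2 * ((1-s) * α)) := by rw [hE2def]; ring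
    rw [e]; linarith
  have hsplit2 : ∀ v w : ℝ, 0 < v → 0 < w → (v^p1 + w^p2)^(-α) ≤ v^E1 * w^E2 := by
    intro v w hv hw
    have h := aux_split (p1 := p1) (p2 := p2) hv hw hs0 hs1 (neg_nonpos.2 hα0.le)
    rw [← hE1def, ← hE2def] at h
    exact h
  have hhalf : ∀ (x T : ℝ), 0 < T → 2*T < |x| → |x|/2 ≤ max (|x| - T) 0 := by
    intro x T hT h
    have : |x|/2 ≤ |x| - T := by linarith
    exact le_trans this (le_max_left _ _)
  have htwo : (0:ℝ) ≤ 2 := by norm_num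
  -- ### piece A1
  have hA1int : IntegrableOn f A1 volume := by
    have hf1 : IntegrableOn (fun x : ℝ => c0 * 2^(p1*α) * |x| ^ (-(p1*α)))
        {x : ℝ | R < |x|} volume :=
      (aux_abs_rpow_tail (by linarith : -(p1*α) < -1) hR0).const_mul _
    have hg1 : IntegrableOn (fun _ : ℝ => (1:ℝ)) (Icc (-(2*t.2)) (2*t.2)) volume :=
      integrableOn_const measure_Icc_lt_top.ne
    refine Integrable.mono' (aux_prod_int hf1 hg1) (hfmeas.aestronglyMeasurable.restrict) ?_
    filter_upwards [ae_restrict_mem hA1m] with u hu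
    have hu1 : R < |u.1| := hu.1
    rw [Real.norm_eq_abs, abs_of_nonneg (hfnn u)]
    have hkt := key_tail u (Or.inl (by linarith))
    refine hkt.trans ?_
    have hhalf1 : |u.1|/2 ≤ max (|u.1| - t.1) 0 := hhalf u.1 t.1 ht1 (by linarith)
    have hb1 : ((|u.1|/2) : ℝ)^p1 ≤ max (|u.1|-t.1) 0 ^ p1 + max (|u.2|-t.2) 0 ^ p2 := by
      have i1 := Real.rpow_le_rpow (by positivity) hhalf1 hp1.le
      have i2 := Real.rpow_nonneg (le_max_right (|u.2|-t.2) 0) p2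
      have i3 := Real.rpow_nonneg (show (0:ℝ) ≤ max (|u.2|-t.2) 0 from le_max_right _ _) p2
      linarith
    have hpos : (0:ℝ) < ((|u.1|/2))^p1 :=
      Real.rpow_pos_of_pos (show (0:ℝ) < |u.1|/2 by linarith) _
    have h8 : (max (|u.1|-t.1) 0 ^ p1 + max (|u.2|-t.2) 0 ^ p2) ^ (-α)
        ≤ (((|u.1|/2))^p1)^(-α) :=
      Real.rpow_le_rpow_of_nonpos hpos hb1 (neg_nonpos.2 hα0.le)
    have heq : ((((|u.1|/2)) : ℝ)^p1)^(-α) = 2^(p1*α) * |u.1| ^ (-(p1*α)) := by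
      rw [← Real.rpow_mul (by positivity), show p1 * -α = -(p1*α) by ring,
        show |u.1|/2 = |u.1| * 2⁻¹ by ring,
        Real.mul_rpow (abs_nonneg _) (by norm_num),
        Real.inv_rpow htwo, ← Real.rpow_neg htwo, neg_neg, mul_comm]
    refine (mul_le_mul_of_nonneg_left h8 hc0).trans (le_of_eq ?_)
    rw [heq]; ring
  -- ### piece A2
  have hA2int : IntegrableOn f A2 volume := by
    have hf2 : IntegrableOn (fun x : ℝ => (c0 * (2^(-E1) * 2^(-E2))) * |x| ^ E1)
        {x : ℝ | R < |x|} volume :=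
      (aux_abs_rpow_tail hE1 hR0).const_mul _
    have hg2 : IntegrableOn (fun y : ℝ => |y| ^ E2) {y : ℝ | 2*t.2 < |y|} volume :=
      aux_abs_rpow_tail hE2 (by linarith)
    refine Integrable.mono' (aux_prod_int hf2 hg2) (hfmeas.aestronglyMeasurable.restrict) ?_
    filter_upwards [ae_restrict_mem hA2m] with u hu
    have hu1 : R < |u.1| := hu.1
    have hu2 : 2*t.2 < |u.2| := hu.2
    rw [Real.norm_eq_abs, abs_of_nonneg (hfnn u)]
    have hkt := key_tail u (Or.inl (by linarith))
    refine hkt.trans ?_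
    have hhalf1 : |u.1|/2 ≤ max (|u.1| - t.1) 0 := hhalf u.1 t.1 ht1 (by linarith)
    have hhalf2 : |u.2|/2 ≤ max (|u.2| - t.2) 0 := hhalf u.2 t.2 ht2 hu2
    have hx0 : (0:ℝ) < |u.1|/2 := by
      have : (0:ℝ) < |u.1| := by linarith
      linarith
    have hy0 : (0:ℝ) < |u.2|/2 := by
      have : (0:ℝ) < |u.2| := by linarith
      linarith
    have hb1 := Real.rpow_le_rpow hx0.le hhalf1 hp1.le
    have hb2 := Real.rpow_le_rpow hy0.le hhalf2 hp2.le
    have hpos : (0:ℝ) < ((|u.1|/2))^p1 + ((|u.2|/2))^p2 :=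
      add_pos (Real.rpow_pos_of_pos hx0 _) (Real.rpow_pos_of_pos hy0 _)
    have h8 : (max (|u.1|-t.1) 0 ^ p1 + max (|u.2|-t.2) 0 ^ p2) ^ (-α)
        ≤ (((|u.1|/2))^p1 + ((|u.2|/2))^p2)^(-α) :=
      Real.rpow_le_rpow_of_nonpos hpos (add_le_add hb1 hb2) (neg_nonpos.2 hα0.le)
    have h9 := hsplit2 (|u.1|/2) (|u.2|/2) hx0 hy0
    have heq1 : (((|u.1|/2)) : ℝ)^E1 = |u.1|^E1 * (2:ℝ)^(-E1) := by
      rw [show |u.1|/2 = |u.1| * 2⁻¹ by ring, Real.mul_rpow (abs_nonneg _) (by norm_num),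
        Real.inv_rpow htwo, ← Real.rpow_neg htwo]
    have heq2 : (((|u.2|/2)) : ℝ)^E2 = |u.2|^E2 * (2:ℝ)^(-E2) := by
      rw [show |u.2|/2 = |u.2| * 2⁻¹ by ring, Real.mul_rpow (abs_nonneg _) (by norm_num),
        Real.inv_rpow htwo, ← Real.rpow_neg htwo]
    calc c0 * (max (|u.1|-t.1) 0 ^ p1 + max (|u.2|-t.2) 0 ^ p2) ^ (-α)
        ≤ c0 * ((((|u.1|/2))^p1 + ((|u.2|/2))^p2)^(-α)) := mul_le_mul_of_nonneg_left h8 hc0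
      _ ≤ c0 * (((|u.1|/2))^E1 * ((|u.2|/2))^E2) := mul_le_mul_of_nonneg_left h9 hc0
      _ = (c0 * (2^(-E1) * 2^(-E2))) * |u.1|^E1 * (|u.2|^E2) := by rw [heq1, heq2]; ring
  -- ### piece A3
  have hA3int : IntegrableOn f A3 volume := by
    have hf3 : IntegrableOn (fun _ : ℝ => (1:ℝ)) (Icc (-(2*t.1)) (2*t.1)) volume :=
      integrableOn_const measure_Icc_lt_top.ne
    have hg3 : IntegrableOn (fun y : ℝ => c0 * 2^(p2*α) * |y| ^ (-(p2*α)))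
        {y : ℝ | R < |y|} volume :=
      (aux_abs_rpow_tail (by linarith : -(p2*α) < -1) hR0).const_mul _
    refine Integrable.mono' (aux_prod_int hf3 hg3) (hfmeas.aestronglyMeasurable.restrict) ?_
    filter_upwards [ae_restrict_mem hA3m] with u hu
    have hu2 : R < |u.2| := hu.2
    rw [Real.norm_eq_abs, abs_of_nonneg (hfnn u)]
    have hkt := key_tail u (Or.inr (by linarith))
    refine hkt.trans ?_
    have hhalf2 : |u.2|/2 ≤ max (|u.2| - t.2) 0 := hhalf u.2 t.2 ht2 (by linarith)
    have hb2 : ((|u.2|/2) : ℝ)^p2 ≤ max (|u.1|-t.1) 0 ^ p1 + max (|u.2|-t.2) 0 ^ p2 := by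
      have i1 := Real.rpow_le_rpow (by positivity) hhalf2 hp2.le
      have i3 := Real.rpow_nonneg (show (0:ℝ) ≤ max (|u.1|-t.1) 0 from le_max_right _ _) p1
      linarith
    have hpos : (0:ℝ) < ((|u.2|/2))^p2 :=
      Real.rpow_pos_of_pos (show (0:ℝ) < |u.2|/2 by linarith) _
    have h8 : (max (|u.1|-t.1) 0 ^ p1 + max (|u.2|-t.2) 0 ^ p2) ^ (-α)
        ≤ (((|u.2|/2))^p2)^(-α) :=
      Real.rpow_le_rpow_of_nonpos hpos hb2 (neg_nonpos.2 hα0.le)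
    have heq : ((((|u.2|/2)) : ℝ)^p2)^(-α) = 2^(p2*α) * |u.2| ^ (-(p2*α)) := by
      rw [← Real.rpow_mul (by positivity), show p2 * -α = -(p2*α) by ring,
        show |u.2|/2 = |u.2| * 2⁻¹ by ring,
        Real.mul_rpow (abs_nonneg _) (by norm_num),
        Real.inv_rpow htwo, ← Real.rpow_neg htwo, neg_neg, mul_comm]
    refine (mul_le_mul_of_nonneg_left h8 hc0).trans (le_of_eq ?_)
    rw [heq]; ring
  -- ### piece A4
  have hA4int : IntegrableOn f A4 volume := by
    have hf4 : IntegrableOn (fun x : ℝ => |x| ^ E1) {x : ℝ | 2*t.1 < |x|} volume :=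
      aux_abs_rpow_tail hE1 (by linarith)
    have hg4 : IntegrableOn (fun y : ℝ => (c0 * (2^(-E1) * 2^(-E2))) * |y| ^ E2)
        {y : ℝ | R < |y|} volume :=
      (aux_abs_rpow_tail hE2 hR0).const_mul _
    refine Integrable.mono' (aux_prod_int hf4 hg4) (hfmeas.aestronglyMeasurable.restrict) ?_
    filter_upwards [ae_restrict_mem hA4m] with u hu
    have hu1 : 2*t.1 < |u.1| := hu.1
    have hu2 : R < |u.2| := hu.2
    rw [Real.norm_eq_abs, abs_of_nonneg (hfnn u)]
    have hkt := key_tail u (Or.inr (by linarith))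
    refine hkt.trans ?_
    have hhalf1 : |u.1|/2 ≤ max (|u.1| - t.1) 0 := hhalf u.1 t.1 ht1 hu1
    have hhalf2 : |u.2|/2 ≤ max (|u.2| - t.2) 0 := hhalf u.2 t.2 ht2 (by linarith)
    have hx0 : (0:ℝ) < |u.1|/2 := by
      have : (0:ℝ) < |u.1| := by linarith
      linarith
    have hy0 : (0:ℝ) < |u.2|/2 := by
      have : (0:ℝ) < |u.2| := by linarith
      linarith
    have hb1 := Real.rpow_le_rpow hx0.le hhalf1 hp1.le
    have hb2 := Real.rpow_le_rpow hy0.le hhalf2 hp2.le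
    have hpos : (0:ℝ) < ((|u.1|/2))^p1 + ((|u.2|/2))^p2 :=
      add_pos (Real.rpow_pos_of_pos hx0 _) (Real.rpow_pos_of_pos hy0 _)
    have h8 : (max (|u.1|-t.1) 0 ^ p1 + max (|u.2|-t.2) 0 ^ p2) ^ (-α)
        ≤ (((|u.1|/2))^p1 + ((|u.2|/2))^p2)^(-α) :=
      Real.rpow_le_rpow_of_nonpos hpos (add_le_add hb1 hb2) (neg_nonpos.2 hα0.le)
    have h9 := hsplit2 (|u.1|/2) (|u.2|/2) hx0 hy0
    have heq1 : (((|u.1|/2)) : ℝ)^E1 = |u.1|^E1 * (2:ℝ)^(-E1) := by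
      rw [show |u.1|/2 = |u.1| * 2⁻¹ by ring, Real.mul_rpow (abs_nonneg _) (by norm_num),
        Real.inv_rpow htwo, ← Real.rpow_neg htwo]
    have heq2 : (((|u.2|/2)) : ℝ)^E2 = |u.2|^E2 * (2:ℝ)^(-E2) := by
      rw [show |u.2|/2 = |u.2| * 2⁻¹ by ring, Real.mul_rpow (abs_nonneg _) (by norm_num),
        Real.inv_rpow htwo, ← Real.rpow_neg htwo]
    calc c0 * (max (|u.1|-t.1) 0 ^ p1 + max (|u.2|-t.2) 0 ^ p2) ^ (-α)
        ≤ c0 * ((((|u.1|/2))^p1 + ((|u.2|/2))^p2)^(-α)) := mul_le_mul_of_nonneg_left h8 hc0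
      _ ≤ c0 * (((|u.1|/2))^E1 * ((|u.2|/2))^E2) := mul_le_mul_of_nonneg_left h9 hc0
      _ = |u.1|^E1 * ((c0 * (2^(-E1) * 2^(-E2))) * |u.2|^E2) := by rw [heq1, heq2]; ring
  -- ### null lines
  have hlines1 : ∀ c : ℝ, volume {u : ℝ × ℝ | u.1 = c} = 0 := by
    intro c
    have he : {u : ℝ × ℝ | u.1 = c} = ({c} : Set ℝ) ×ˢ (univ : Set ℝ) := by
      ext w
      constructor
      · intro h; exact ⟨h, trivial⟩
      · intro h; exact h.1
    rw [he, Measure.volume_eq_prod, Measure.prod_prod]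
    simp
  have hlines2 : ∀ c : ℝ, volume {u : ℝ × ℝ | u.2 = c} = 0 := by
    intro c
    have he : {u : ℝ × ℝ | u.2 = c} = (univ : Set ℝ) ×ˢ ({c} : Set ℝ) := by
      ext w
      constructor
      · intro h; exact ⟨trivial, h⟩
      · intro h; exact h.2
    rw [he, Measure.volume_eq_prod, Measure.prod_prod]
    simp
  have hae : ∀ᵐ u : ℝ × ℝ, u.1 ≠ 0 ∧ u.1 ≠ t.1 ∧ u.2 ≠ 0 ∧ u.2 ≠ t.2 := by
    have a1 : ∀ᵐ u : ℝ × ℝ, u.1 ≠ 0 := by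
      rw [ae_iff]
      have he : {u : ℝ × ℝ | ¬ u.1 ≠ 0} = {u : ℝ × ℝ | u.1 = 0} := by ext w; simp
      rw [he]; exact hlines1 0
    have a2 : ∀ᵐ u : ℝ × ℝ, u.1 ≠ t.1 := by
      rw [ae_iff]
      have he : {u : ℝ × ℝ | ¬ u.1 ≠ t.1} = {u : ℝ × ℝ | u.1 = t.1} := by ext w; simp
      rw [he]; exact hlines1 t.1
    have a3 : ∀ᵐ u : ℝ × ℝ, u.2 ≠ 0 := by
      rw [ae_iff]
      have he : {u : ℝ × ℝ | ¬ u.2 ≠ 0} = {u : ℝ × ℝ | u.2 = 0} := by ext w; simp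
      rw [he]; exact hlines2 0
    have a4 : ∀ᵐ u : ℝ × ℝ, u.2 ≠ t.2 := by
      rw [ae_iff]
      have he : {u : ℝ × ℝ | ¬ u.2 ≠ t.2} = {u : ℝ × ℝ | u.2 = t.2} := by ext w; simp
      rw [he]; exact hlines2 t.2
    filter_upwards [a1, a2, a3, a4] with u e1 e2 e3 e4
    exact ⟨e1, e2, e3, e4⟩
  -- ### near piece
  have hSint : IntegrableOn f S volume := by
    rcases lt_or_ge β 0 with hβneg | hβpos
    · set γ : ℝ := p1 * (p2/(p1+p2) * β) with hγdef
      have hp12 : 0 < p1 + p2 := by linarith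
      have hγeq2 : p2 * ((1 - p2/(p1+p2)) * β) = γ := by rw [hγdef]; field_simp; ring
      have hγm1 : -1 < γ := by
        have hq : (0:ℝ) < p1 * p2 / (p1+p2) := by positivity
        have hqP : p1 * p2/(p1+p2) * P = 1 := by rw [hPdef]; field_simp; ring
        have h2 := mul_lt_mul_of_pos_left hβP hq
        have h3 : p1 * p2/(p1+p2) * -P = -1 := by rw [mul_neg, hqP]
        have h4 : γ = p1 * p2/(p1+p2) * β := by rw [hγdef]; ring
        rw [h4]
        linarith [h2, h3]
      have hprod : ∀ v w : ℝ, v ≠ 0 → w ≠ 0 →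
          (|v| ^ p1 + |w| ^ p2) ^ β ≤ |v| ^ γ * |w| ^ γ := by
        intro v w hv hw
        have h := aux_split (p1 := p1) (p2 := p2) (abs_pos.2 hv) (abs_pos.2 hw)
          (s := p2/(p1+p2)) (by positivity) ((div_le_one hp12).2 (by linarith)) hβneg.le
        rw [hγeq2, ← hγdef] at h
        exact h
      have hIccR : -R ≤ R := by linarith
      have bint : ∀ a b : ℝ, IntegrableOn
          (fun u : ℝ × ℝ => cN * (|u.1 - a| ^ γ * |u.2 - b| ^ γ)) S volume := by
        intro a b
        exact (aux_prod_int (aux_abs_rpow_int_Icc hγm1 a (-R) R hIccR)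
          (aux_abs_rpow_int_Icc hγm1 b (-R) R hIccR)).const_mul cN
      have hbig := (((bint t.1 t.2).add (bint 0 t.2)).add (bint t.1 0)).add (bint 0 0)
      refine Integrable.mono' hbig (hfmeas.aestronglyMeasurable.restrict) ?_
      filter_upwards [ae_restrict_of_ae hae] with u hu
      obtain ⟨h1, h2, h3, h4⟩ := hu
      rw [Real.norm_eq_abs, abs_of_nonneg (hfnn u)]
      have hkn := key_near u h1 h2 h3 h4
      refine hkn.trans ?_
      simp only [Pi.add_apply, sub_zero]
      have e1 : (|t.1 - u.1| ^ p1 + |t.2 - u.2| ^ p2) ^ β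
          ≤ |u.1 - t.1| ^ γ * |u.2 - t.2| ^ γ := by
        rw [abs_sub_comm u.1 t.1, abs_sub_comm u.2 t.2]
        exact hprod (t.1 - u.1) (t.2 - u.2) (sub_ne_zero.2 (Ne.symm h2))
          (sub_ne_zero.2 (Ne.symm h4))
      have e2 : (|u.1| ^ p1 + |t.2 - u.2| ^ p2) ^ β ≤ |u.1| ^ γ * |u.2 - t.2| ^ γ := by
        rw [abs_sub_comm u.2 t.2]
        exact hprod u.1 (t.2 - u.2) h1 (sub_ne_zero.2 (Ne.symm h4))
      have e3 : (|t.1 - u.1| ^ p1 + |u.2| ^ p2) ^ β ≤ |u.1 - t.1| ^ γ * |u.2| ^ γ := by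
        rw [abs_sub_comm u.1 t.1]
        exact hprod (t.1 - u.1) u.2 (sub_ne_zero.2 (Ne.symm h2)) h3
      have e4 : (|u.1| ^ p1 + |u.2| ^ p2) ^ β ≤ |u.1| ^ γ * |u.2| ^ γ := hprod u.1 u.2 h1 h3
      have c1 := mul_le_mul_of_nonneg_left e1 hcN
      have c2 := mul_le_mul_of_nonneg_left e2 hcN
      have c3 := mul_le_mul_of_nonneg_left e3 hcN
      have c4 := mul_le_mul_of_nonneg_left e4 hcN
      calc cN * ((|t.1 - u.1| ^ p1 + |t.2 - u.2| ^ p2) ^ β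
            + (|u.1| ^ p1 + |t.2 - u.2| ^ p2) ^ β
            + (|t.1 - u.1| ^ p1 + |u.2| ^ p2) ^ β
            + (|u.1| ^ p1 + |u.2| ^ p2) ^ β)
          = cN * ((|t.1 - u.1| ^ p1 + |t.2 - u.2| ^ p2) ^ β)
            + cN * ((|u.1| ^ p1 + |t.2 - u.2| ^ p2) ^ β)
            + cN * ((|t.1 - u.1| ^ p1 + |u.2| ^ p2) ^ β)
            + cN * ((|u.1| ^ p1 + |u.2| ^ p2) ^ β) := by ring
        _ ≤ cN * (|u.1 - t.1| ^ γ * |u.2 - t.2| ^ γ)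
            + cN * (|u.1| ^ γ * |u.2 - t.2| ^ γ)
            + cN * (|u.1 - t.1| ^ γ * |u.2| ^ γ)
            + cN * (|u.1| ^ γ * |u.2| ^ γ) := by
            exact add_le_add (add_le_add (add_le_add c1 c2) c3) c4
    · set B0 : ℝ := (2*R)^p1 + (2*R)^p2 with hB0def
      have hconst : IntegrableOn (fun _ : ℝ × ℝ => cN * (4 * B0^β)) S volume :=
        integrableOn_const ((isCompact_Icc.prod isCompact_Icc).measure_lt_top.ne)
      refine Integrable.mono' hconst (hfmeas.aestronglyMeasurable.restrict) ?_
      filter_upwards [ae_restrict_mem hSm, ae_restrict_of_ae hae] with u huS hu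
      obtain ⟨h1, h2, h3, h4⟩ := hu
      rw [Real.norm_eq_abs, abs_of_nonneg (hfnn u)]
      refine (key_near u h1 h2 h3 h4).trans ?_
      have hu1 : |u.1| ≤ R := abs_le.2 ⟨huS.1.1, huS.1.2⟩
      have hu2 : |u.2| ≤ R := abs_le.2 ⟨huS.2.1, huS.2.2⟩
      have hb : ∀ v w : ℝ, |v| ≤ 2*R → |w| ≤ 2*R → (|v|^p1 + |w|^p2)^β ≤ B0^β := by
        intro v w hv hw
        refine Real.rpow_le_rpow (by positivity) ?_ hβpos
        rw [hB0def]
        exact add_le_add (Real.rpow_le_rpow (abs_nonneg _) hv hp1.le)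
          (Real.rpow_le_rpow (abs_nonneg _) hw hp2.le)
      have m1 : |t.1 - u.1| ≤ 2*R := by
        have h := abs_sub t.1 u.1
        rw [abs_of_pos ht1] at h
        linarith
      have m2 : |t.2 - u.2| ≤ 2*R := by
        have h := abs_sub t.2 u.2
        rw [abs_of_pos ht2] at h
        linarith
      have m3 : |u.1| ≤ 2*R := by linarith
      have m4 : |u.2| ≤ 2*R := by linarith
      have k1 := hb _ _ m1 m2
      have k2 := hb _ _ m3 m2
      have k3 := hb _ _ m1 m4
      have k4 := hb _ _ m3 m4
      have : (|t.1 - u.1| ^ p1 + |t.2 - u.2| ^ p2) ^ β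
            + (|u.1| ^ p1 + |t.2 - u.2| ^ p2) ^ β
            + (|t.1 - u.1| ^ p1 + |u.2| ^ p2) ^ β
            + (|u.1| ^ p1 + |u.2| ^ p2) ^ β ≤ 4 * B0^β := by linarith
      exact mul_le_mul_of_nonneg_left this hcN
  -- ### coverage and conclusion
  have hcover : (univ : Set (ℝ × ℝ)) ⊆ S ∪ (A1 ∪ (A2 ∪ (A3 ∪ A4))) := by
    intro u _
    rcases lt_or_ge R |u.1| with hx | hx
    · rcases le_or_gt |u.2| (2*t.2) with hy | hy
      · exact Or.inr (Or.inl ⟨hx, ⟨(abs_le.1 hy).1, (abs_le.1 hy).2⟩⟩)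
      · exact Or.inr (Or.inr (Or.inl ⟨hx, hy⟩))
    · rcases lt_or_ge R |u.2| with hy | hy
      · rcases le_or_gt |u.1| (2*t.1) with hx2 | hx2
        · exact Or.inr (Or.inr (Or.inr (Or.inl ⟨⟨(abs_le.1 hx2).1, (abs_le.1 hx2).2⟩, hy⟩)))
        · exact Or.inr (Or.inr (Or.inr (Or.inr ⟨hx2, hy⟩)))
      · exact Or.inl ⟨⟨(abs_le.1 hx).1, (abs_le.1 hx).2⟩, ⟨(abs_le.1 hy).1, (abs_le.1 hy).2⟩⟩
  rw [← integrableOn_univ]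
  exact ((hSint.union (hA1int.union (hA2int.union (hA3int.union hA4int))))).mono_set hcover
end
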